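/- arXiv:1609.08733 — 12 statements merged into one kernel-verified Lean document; each statement's English description precedes it below -/
import Mathlib

section
/- Let L be a symmetric real n×n matrix and b ∈ ℝⁿ, and let W₁(L) = [[L+I, −I], [−I, I]] be the 2n×2n whiskered matrix. Then the pair (W₁(L), [bᵀ, 0ᵀ]ᵀ) (the input vector is b on the original n nodes and zero on the n new leaf nodes) is uncontrollable if and only if the pair (L, b) is uncontrollable. -/
open Matrix

/-- PBH-style uncontrollability for a symmetric state matrix: there is a nonzero
eigenvector of `A` orthogonal to `b`. -/
def Uncontrollable {m : Type*} [Fintype m] (A : Matrix m m ℝ) (b : m → ℝ) : Prop :=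
  ∃ (lam : ℝ) (w : m → ℝ), w ≠ 0 ∧ A.mulVec w = lam • w ∧ w ⬝ᵥ b = 0

/-- The whiskered matrix `W₁(L) = [[L+I, −I], [−I, I]]`. -/
noncomputable def whisker1 {n : ℕ} (L : Matrix (Fin n) (Fin n) ℝ) :
    Matrix (Fin n ⊕ Fin n) (Fin n ⊕ Fin n) ℝ :=
  Matrix.fromBlocks (L + 1) (-1) (-1) 1

theorem whisker1_controllability_b0 {n : ℕ} (L : Matrix (Fin n) (Fin n) ℝ)
    (hL : L.IsSymm) (b : Fin n → ℝ) :
    Uncontrollable (whisker1 L) (Sum.elim b 0) ↔ Uncontrollable L b := by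
  constructor
  · rintro ⟨lam, w, hw0, hw, hwb⟩
    set u : Fin n → ℝ := w ∘ Sum.inl with hu
    set v : Fin n → ℝ := w ∘ Sum.inr with hv
    have hwe : w = Sum.elim u v := by ext (i | i) <;> rfl
    rw [hwe] at hw hwb
    rw [whisker1, fromBlocks_mulVec] at hw
    -- component equations
    have h1 : ∀ i, (L *ᵥ u) i + u i - v i = lam * u i := by
      intro i
      have := congrFun hw (Sum.inl i)
      simp [Matrix.neg_mulVec, Matrix.one_mulVec, Matrix.add_mulVec,
        sub_eq_add_neg] at this
      linarith
    have h2 : ∀ i, -u i + v i = lam * v i := by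
      intro i
      have := congrFun hw (Sum.inr i)
      simp [Matrix.neg_mulVec, Matrix.one_mulVec] at this
      linarith
    have hub : u ⬝ᵥ b = 0 := by
      simpa [dotProduct, Fintype.sum_sum_type] using hwb
    have hlam : lam ≠ 1 := by
      intro h
      subst h
      have hu0 : u = 0 := by
        funext i
        have := h2 i
        have : u i = 0 := by linarith
        simpa using this
      have hv0 : v = 0 := by
        funext i
        have := h1 i
        rw [hu0] at this
        simp [Matrix.mulVec_zero] at this
        simp only [Pi.zero_apply]
        linarith
      exact hw0 (by rw [hwe, hu0, hv0]; ext (i | i) <;> simp)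
    have ht : (1 : ℝ) - lam ≠ 0 := sub_ne_zero.mpr (Ne.symm hlam)
    have hvu : ∀ i, v i = (1 - lam)⁻¹ * u i := by
      intro i
      have := h2 i
      field_simp
      linarith
    have hu0 : u ≠ 0 := by
      intro h
      have hv0 : v = 0 := by
        funext i
        have := hvu i
        rw [h] at this
        simpa using this
      exact hw0 (by rw [hwe, h, hv0]; ext (i | i) <;> simp)
    refine ⟨lam - 1 + (1 - lam)⁻¹, u, hu0, ?_, hub⟩
    funext i
    have h1i := h1 i
    have hvi := hvu i
    simp only [Pi.smul_apply, smul_eq_mul]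
    rw [hvi] at h1i
    field_simp at h1i ⊢
    ring_nf
    ring_nf at h1i
    linarith
  · rintro ⟨mu, u, hu0, hLu, hub⟩
    set s := Real.sqrt (mu ^ 2 + 4) with hs_def
    have hs : s ^ 2 = mu ^ 2 + 4 := Real.sq_sqrt (by positivity)
    have hs0 : 0 ≤ s := Real.sqrt_nonneg _
    set t : ℝ := (s - mu) / 2 with ht_def
    have htpos : 0 < t := by
      have : mu < s := by nlinarith
      simp only [ht_def]
      linarith
    have htne : t ≠ 0 := ne_of_gt htpos
    have hteq : t * t + mu * t = 1 := by
      simp only [ht_def]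
      linear_combination hs / 4
    refine ⟨1 - t, Sum.elim u (t⁻¹ • u), ?_, ?_, ?_⟩
    · intro h
      apply hu0
      funext i
      exact congrFun h (Sum.inl i)
    · rw [whisker1, fromBlocks_mulVec]
      funext i
      cases i with
      | inl i =>
        simp only [Sum.elim_inl, Sum.elim_comp_inl, Sum.elim_comp_inr,
          Matrix.neg_mulVec, Matrix.one_mulVec, Matrix.add_mulVec,
          Matrix.mulVec_smul, hLu, Pi.add_apply, Pi.neg_apply,
          Pi.smul_apply, smul_eq_mul]
        have hmu : mu * t = 1 - t * t := by linarith
        field_simp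
        linear_combination u i * hmu
      | inr i =>
        simp only [Sum.elim_inr, Sum.elim_comp_inl, Sum.elim_comp_inr,
          Matrix.neg_mulVec, Matrix.one_mulVec, Matrix.add_mulVec,
          Pi.add_apply, Pi.neg_apply, Pi.smul_apply, smul_eq_mul]
        field_simp
        ring
    · simpa [dotProduct, Fintype.sum_sum_type, mul_zero] using hub
end

section
/- Let L be a real n×n matrix, w ∈ ℝⁿ and λ, Λ ∈ ℝ with L w = λ w. If Λ satisfies the quadratic equation Λ² − (λ+2)Λ + λ = 0 (in particular Λ = (λ + 2 + √(λ²+4))/2 is such a root), then Λ ≠ 1 and the stacked vector [wᵀ, αᵀ]ᵀ with α = (1−Λ)⁻¹ w satisfies W₁(L)·[wᵀ, αᵀ]ᵀ = Λ·[wᵀ, αᵀ]ᵀ, i.e. it is an eigenvector of the whiskered matrix with eigenvalue Λ whenever w ≠ 0. -/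
open Matrix

theorem whisker1_eigenvector_lift {n : ℕ} (L : Matrix (Fin n) (Fin n) ℝ)
    (w : Fin n → ℝ) (lam Lam : ℝ) (hw : L.mulVec w = lam • w)
    (hLam : Lam ^ 2 - (lam + 2) * Lam + lam = 0) :
    ((lam + 2 + Real.sqrt (lam ^ 2 + 4)) / 2) ^ 2
        - (lam + 2) * ((lam + 2 + Real.sqrt (lam ^ 2 + 4)) / 2) + lam = 0 ∧
    Lam ≠ 1 ∧
    (whisker1 L).mulVec (Sum.elim w ((1 - Lam)⁻¹ • w))
      = Lam • Sum.elim w ((1 - Lam)⁻¹ • w) ∧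
    (w ≠ 0 → Sum.elim w ((1 - Lam)⁻¹ • w) ≠ 0) := by
  have hs : Real.sqrt (lam ^ 2 + 4) ^ 2 = lam ^ 2 + 4 := by
    rw [Real.sq_sqrt]; positivity
  have hΛ1 : Lam ≠ 1 := by
    intro h
    rw [h] at hLam
    nlinarith [hLam]
  have h1Λ : (1 : ℝ) - Lam ≠ 0 := sub_ne_zero.mpr (fun h => hΛ1 h.symm)
  refine ⟨by nlinarith [hs], hΛ1, ?_, ?_⟩
  · have htop : lam + 1 - (1 - Lam)⁻¹ = Lam := by
      field_simp
      nlinarith [hLam]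
    have hbot : -1 + (1 - Lam)⁻¹ = Lam * (1 - Lam)⁻¹ := by
      field_simp
      ring
    funext i
    cases i with
    | inl j =>
      have hwj := congrFun hw j
      simp only [whisker1, fromBlocks_mulVec, Sum.elim_inl, Pi.smul_apply,
        add_mulVec, one_mulVec, neg_mulVec, mulVec_smul, Pi.add_apply,
        Pi.neg_apply, smul_eq_mul, Sum.elim_comp_inl, Sum.elim_comp_inr, Function.comp] at *
      rw [hwj]
      linear_combination w j * htop
    | inr j =>
      simp only [whisker1, fromBlocks_mulVec, Sum.elim_inr, Pi.smul_apply,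
        neg_mulVec, one_mulVec, mulVec_smul, Pi.add_apply,
        Pi.neg_apply, smul_eq_mul, Sum.elim_comp_inl, Sum.elim_comp_inr, Function.comp]
      linear_combination w j * hbot
  · intro hwne hcon
    apply hwne
    funext j
    have := congrFun hcon (Sum.inl j)
    simpa using this
end

section
/- Let L be a real n×n matrix and suppose [w₁ᵀ, w₂ᵀ]ᵀ ∈ ℝ^{2n} is a nonzero vector with W₁(L)·[w₁ᵀ, w₂ᵀ]ᵀ = λ·[w₁ᵀ, w₂ᵀ]ᵀ for some λ ∈ ℝ. Then λ ≠ 1, w₂ = (1−λ)⁻¹ w₁, w₁ ≠ 0, and w₁ is an eigenvector of L with eigenvalue (1 − (1−λ)²)/(1−λ), i.e. L w₁ = ((1 − (1−λ)²)/(1−λ)) w₁. -/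
open Matrix

theorem whisker1_eigenvector_restrict {n : ℕ} (L : Matrix (Fin n) (Fin n) ℝ)
    (w₁ w₂ : Fin n → ℝ) (lam : ℝ)
    (hne : Sum.elim w₁ w₂ ≠ 0)
    (heig : (whisker1 L).mulVec (Sum.elim w₁ w₂) = lam • Sum.elim w₁ w₂) :
    lam ≠ 1 ∧ w₂ = (1 - lam)⁻¹ • w₁ ∧ w₁ ≠ 0 ∧
    L.mulVec w₁ = ((1 - (1 - lam) ^ 2) / (1 - lam)) • w₁ := by
  rw [whisker1, Matrix.fromBlocks_mulVec] at heig
  have h1 : L.mulVec w₁ + w₁ - w₂ = lam • w₁ := by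
    have := congrArg (fun f => f ∘ Sum.inl) heig
    simp only [Sum.elim_comp_inl] at this
    have : (L + 1).mulVec w₁ + (-1 : Matrix _ _ ℝ).mulVec w₂ = lam • w₁ := by
      funext i
      exact congrFun this i
    simpa [Matrix.add_mulVec, Matrix.neg_mulVec, sub_eq_add_neg] using this
  have h2 : -w₁ + w₂ = lam • w₂ := by
    have := congrArg (fun f => f ∘ Sum.inr) heig
    simp only [Sum.elim_comp_inr] at this
    have : (-1 : Matrix _ _ ℝ).mulVec w₁ + (1 : Matrix _ _ ℝ).mulVec w₂ = lam • w₂ := by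
      funext i
      exact congrFun this i
    simpa [Matrix.neg_mulVec] using this
  have hw1 : w₁ = (1 - lam) • w₂ := by
    funext i
    have := congrFun h2 i
    simp [Pi.add_apply, Pi.neg_apply, Pi.smul_apply, smul_eq_mul] at this ⊢
    linarith
  have hlam : lam ≠ 1 := by
    intro h
    subst h
    have hw10 : w₁ = 0 := by simpa using hw1
    have hw20 : w₂ = 0 := by
      have := h1
      rw [hw10] at this
      simpa [Matrix.mulVec_zero] using this.symm
    apply hne
    funext x
    cases x <;> simp [hw10, hw20]
  have hne1 : (1 : ℝ) - lam ≠ 0 := sub_ne_zero.mpr (Ne.symm hlam)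
  have hw2 : w₂ = (1 - lam)⁻¹ • w₁ := by
    rw [hw1, smul_smul, inv_mul_cancel₀ hne1, one_smul]
  have hw1ne : w₁ ≠ 0 := by
    intro h
    have hw20 : w₂ = 0 := by rw [hw2, h, smul_zero]
    apply hne
    funext x
    cases x <;> simp [h, hw20]
  refine ⟨hlam, hw2, hw1ne, ?_⟩
  funext i
  have e1 := congrFun h1 i
  have e2 := congrFun hw2 i
  simp only [Pi.add_apply, Pi.sub_apply, Pi.smul_apply, smul_eq_mul] at e1 e2 ⊢
  rw [e2] at e1
  field_simp at e1 ⊢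
  ring_nf at e1 ⊢
  linarith
end

section
/- Let L be a real n×n matrix, w ∈ ℝⁿ with L w = λ w for some λ ∈ ℝ, and let Λ ∈ ℝ satisfy Λ ≠ 1, Λ² − 3Λ + 1 ≠ 0, and the compatibility equation λ + 2 = Λ + 1/(1−Λ) + (1−Λ)/(Λ² − 3Λ + 1). Define α = (1−Λ)⁻¹ w, β = ((1−Λ)/(Λ² − 3Λ + 1)) w, and γ = (1−Λ)⁻¹ β. Then W₂(L)·[wᵀ, αᵀ, βᵀ, γᵀ]ᵀ = Λ·[wᵀ, αᵀ, βᵀ, γᵀ]ᵀ, so when w ≠ 0 this stacked vector is an eigenvector of the path-whiskered matrix with eigenvalue Λ, and each of α, β, γ is a scalar multiple of w. -/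
open Matrix

/-- The path-whiskered matrix
`W₂(L) = [[L+2I, −I, −I, 0], [−I, I, 0, 0], [−I, 0, 2I, −I], [0, 0, −I, I]]`. -/
noncomputable def whisker2 {n : ℕ} (L : Matrix (Fin n) (Fin n) ℝ) :
    Matrix ((Fin n ⊕ Fin n) ⊕ (Fin n ⊕ Fin n)) ((Fin n ⊕ Fin n) ⊕ (Fin n ⊕ Fin n)) ℝ :=
  Matrix.fromBlocks
    (Matrix.fromBlocks (L + 2) (-1) (-1) 1)
    (Matrix.fromBlocks (-1) 0 0 0)
    (Matrix.fromBlocks (-1) 0 0 0)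
    (Matrix.fromBlocks 2 (-1) (-1) 1)

theorem whisker2_eigenvector_lift {n : ℕ} (L : Matrix (Fin n) (Fin n) ℝ)
    (w : Fin n → ℝ) (lam Lam : ℝ) (hw : L.mulVec w = lam • w)
    (h1 : Lam ≠ 1) (h2 : Lam ^ 2 - 3 * Lam + 1 ≠ 0)
    (hcomp : lam + 2 = Lam + 1 / (1 - Lam) + (1 - Lam) / (Lam ^ 2 - 3 * Lam + 1)) :
    (whisker2 L).mulVec
        (Sum.elim (Sum.elim w ((1 - Lam)⁻¹ • w))
          (Sum.elim (((1 - Lam) / (Lam ^ 2 - 3 * Lam + 1)) • w)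
            ((1 - Lam)⁻¹ • ((1 - Lam) / (Lam ^ 2 - 3 * Lam + 1)) • w)))
      = Lam • (Sum.elim (Sum.elim w ((1 - Lam)⁻¹ • w))
          (Sum.elim (((1 - Lam) / (Lam ^ 2 - 3 * Lam + 1)) • w)
            ((1 - Lam)⁻¹ • ((1 - Lam) / (Lam ^ 2 - 3 * Lam + 1)) • w))) ∧
    (w ≠ 0 →
      Sum.elim (Sum.elim w ((1 - Lam)⁻¹ • w))
          (Sum.elim (((1 - Lam) / (Lam ^ 2 - 3 * Lam + 1)) • w)
            ((1 - Lam)⁻¹ • ((1 - Lam) / (Lam ^ 2 - 3 * Lam + 1)) • w)) ≠ 0) ∧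
    (∃ c : ℝ, (1 - Lam)⁻¹ • w = c • w) ∧
    (∃ c : ℝ, ((1 - Lam) / (Lam ^ 2 - 3 * Lam + 1)) • w = c • w) ∧
    (∃ c : ℝ, (1 - Lam)⁻¹ • ((1 - Lam) / (Lam ^ 2 - 3 * Lam + 1)) • w = c • w) := by
  have h1' : (1 : ℝ) - Lam ≠ 0 := sub_ne_zero.mpr (Ne.symm h1)
  have key1 : lam + 2 - (1 - Lam)⁻¹ - (1 - Lam) / (Lam ^ 2 - 3 * Lam + 1) = Lam := by
    rw [hcomp, one_div]; ring
  have key2 : -1 + (1 - Lam)⁻¹ = Lam * (1 - Lam)⁻¹ := by field_simp; ring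
  have key3 : -1 + ((1 - Lam) / (Lam ^ 2 - 3 * Lam + 1) * 2
      - (1 - Lam)⁻¹ * ((1 - Lam) / (Lam ^ 2 - 3 * Lam + 1)))
      = Lam * ((1 - Lam) / (Lam ^ 2 - 3 * Lam + 1)) := by
    have hx : (Lam ^ 2 - 3 * Lam + 1) * (Lam ^ 2 - 3 * Lam + 1)⁻¹ = 1 := mul_inv_cancel₀ h2
    have hy : (1 - Lam) * (1 - Lam)⁻¹ = 1 := mul_inv_cancel₀ h1'
    simp only [div_eq_mul_inv]
    linear_combination (-(Lam ^ 2 - 3 * Lam + 1)⁻¹) * hy + hx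
  have key4 : -((1 - Lam) / (Lam ^ 2 - 3 * Lam + 1))
      + (1 - Lam)⁻¹ * ((1 - Lam) / (Lam ^ 2 - 3 * Lam + 1))
      = Lam * ((1 - Lam)⁻¹ * ((1 - Lam) / (Lam ^ 2 - 3 * Lam + 1))) := by field_simp; ring
  have h2v : ∀ v : Fin n → ℝ, ((2 : Matrix (Fin n) (Fin n) ℝ)).mulVec v = 2 • v := by
    intro v
    rw [show (2 : Matrix (Fin n) (Fin n) ℝ) = 1 + 1 by norm_num, Matrix.add_mulVec,
      Matrix.one_mulVec, two_smul]
  refine ⟨?_, ?_, ⟨(1 - Lam)⁻¹, rfl⟩, ⟨(1 - Lam) / (Lam ^ 2 - 3 * Lam + 1), rfl⟩,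
    ⟨(1 - Lam)⁻¹ * ((1 - Lam) / (Lam ^ 2 - 3 * Lam + 1)), smul_smul _ _ _⟩⟩
  · funext i
    obtain (i | i) | (i | i) := i <;>
      simp [whisker2, Matrix.fromBlocks_mulVec, Matrix.add_mulVec, Matrix.neg_mulVec,
        Matrix.one_mulVec, Matrix.zero_mulVec, hw, h2v, Pi.smul_apply, smul_eq_mul]
    · linear_combination w i * key1
    · linear_combination w i * key2
    · linear_combination w i * key3
    · linear_combination w i * key4
  · intro hne hz
    exact hne (funext fun i => congrFun hz (Sum.inl (Sum.inl i)))
end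

section
/- Let L be a real n×n matrix and suppose [w₁ᵀ, w₂ᵀ, w₃ᵀ, w₄ᵀ]ᵀ ∈ ℝ^{4n} is a nonzero vector with W₂(L)·[w₁ᵀ, w₂ᵀ, w₃ᵀ, w₄ᵀ]ᵀ = λ·[w₁ᵀ, w₂ᵀ, w₃ᵀ, w₄ᵀ]ᵀ for some λ ∈ ℝ with (λ−1)(λ² − 3λ + 1) ≠ 0. Then w₂ = (1−λ)⁻¹ w₁, w₃ = ((1−λ)/(λ² − 3λ + 1)) w₁, w₄ = (1−λ)⁻¹ w₃, the component w₁ is nonzero, and w₁ is an eigenvector of L with eigenvalue Λ = λ − 2 + 1/(1−λ) + (1−λ)/(λ² − 3λ + 1). -/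
open Matrix

lemma two_mulVec' {n : ℕ} (x : Fin n → ℝ) : (2 : Matrix (Fin n) (Fin n) ℝ) *ᵥ x = x + x := by
  have h : (2 : Matrix (Fin n) (Fin n) ℝ) = 1 + 1 := by norm_num
  rw [h, add_mulVec, one_mulVec]

theorem whisker2_eigenvector_restrict {n : ℕ} (L : Matrix (Fin n) (Fin n) ℝ)
    (w₁ w₂ w₃ w₄ : Fin n → ℝ) (lam : ℝ)
    (hne : Sum.elim (Sum.elim w₁ w₂) (Sum.elim w₃ w₄) ≠ 0)
    (hlam : (lam - 1) * (lam ^ 2 - 3 * lam + 1) ≠ 0)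
    (heig : (whisker2 L).mulVec (Sum.elim (Sum.elim w₁ w₂) (Sum.elim w₃ w₄))
      = lam • Sum.elim (Sum.elim w₁ w₂) (Sum.elim w₃ w₄)) :
    w₂ = (1 - lam)⁻¹ • w₁ ∧
    w₃ = ((1 - lam) / (lam ^ 2 - 3 * lam + 1)) • w₁ ∧
    w₄ = (1 - lam)⁻¹ • w₃ ∧
    w₁ ≠ 0 ∧
    L.mulVec w₁
      = (lam - 2 + 1 / (1 - lam) + (1 - lam) / (lam ^ 2 - 3 * lam + 1)) • w₁ := by
  have ha : lam - 1 ≠ 0 := fun h => hlam (by rw [h, zero_mul])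
  have ha' : (1 : ℝ) - lam ≠ 0 := fun h => ha (by linarith [sub_eq_zero.mp h])
  have hb : lam ^ 2 - 3 * lam + 1 ≠ 0 := fun h => hlam (by rw [h, mul_zero])
  have h1 : ∀ i, (L *ᵥ w₁) i + (w₁ i + w₁ i) + -w₂ i + (-w₃ i + 0) = lam * w₁ i := by
    intro i
    have h := congrFun heig (Sum.inl (Sum.inl i))
    simpa only [whisker2, fromBlocks_mulVec, Sum.elim_inl, Sum.elim_inr, Pi.add_apply,
      Sum.elim_comp_inl, Sum.elim_comp_inr, two_mulVec',
      add_mulVec, neg_mulVec, one_mulVec, zero_mulVec, Pi.neg_apply, Pi.zero_apply,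
      Pi.smul_apply, smul_eq_mul] using h
  have h2 : ∀ i, -w₁ i + w₂ i + (0 + 0) = lam * w₂ i := by
    intro i
    have h := congrFun heig (Sum.inl (Sum.inr i))
    simpa only [whisker2, fromBlocks_mulVec, Sum.elim_inl, Sum.elim_inr, Pi.add_apply,
      Sum.elim_comp_inl, Sum.elim_comp_inr, two_mulVec',
      add_mulVec, neg_mulVec, one_mulVec, zero_mulVec, Pi.neg_apply, Pi.zero_apply,
      Pi.smul_apply, smul_eq_mul] using h
  have h3 : ∀ i, -w₁ i + 0 + (w₃ i + w₃ i + -w₄ i) = lam * w₃ i := by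
    intro i
    have h := congrFun heig (Sum.inr (Sum.inl i))
    simpa only [whisker2, fromBlocks_mulVec, Sum.elim_inl, Sum.elim_inr, Pi.add_apply,
      Sum.elim_comp_inl, Sum.elim_comp_inr, two_mulVec',
      add_mulVec, neg_mulVec, one_mulVec, zero_mulVec, Pi.neg_apply, Pi.zero_apply,
      Pi.smul_apply, smul_eq_mul] using h
  have h4 : ∀ i, 0 + 0 + (-w₃ i + w₄ i) = lam * w₄ i := by
    intro i
    have h := congrFun heig (Sum.inr (Sum.inr i))
    simpa only [whisker2, fromBlocks_mulVec, Sum.elim_inl, Sum.elim_inr, Pi.add_apply,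
      Sum.elim_comp_inl, Sum.elim_comp_inr, two_mulVec',
      add_mulVec, neg_mulVec, one_mulVec, zero_mulVec, Pi.neg_apply, Pi.zero_apply,
      Pi.smul_apply, smul_eq_mul] using h
  have c2 : w₂ = (1 - lam)⁻¹ • w₁ := by
    funext i
    have := h2 i
    simp only [Pi.smul_apply, smul_eq_mul]
    field_simp
    linarith
  have c3 : w₃ = ((1 - lam) / (lam ^ 2 - 3 * lam + 1)) • w₁ := by
    funext i
    have e4 : w₄ i = (1 - lam)⁻¹ * w₃ i := by
      have := h4 i; field_simp; linarith
    have e3 := h3 i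
    rw [e4] at e3
    simp only [Pi.smul_apply, smul_eq_mul]
    field_simp at e3 ⊢
    have hb' : lam * (lam - 3) + 1 ≠ 0 := fun h => hb (by linear_combination h)
    rw [eq_div_iff hb']
    linear_combination e3
  have c4 : w₄ = (1 - lam)⁻¹ • w₃ := by
    funext i
    have := h4 i
    simp only [Pi.smul_apply, smul_eq_mul]
    field_simp
    linarith
  have hw1 : w₁ ≠ 0 := by
    intro h
    apply hne
    rw [h] at c2 c3
    simp only [smul_zero] at c2 c3
    rw [c3, smul_zero] at c4
    funext x
    rcases x with (i | i) | (i | i) <;>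
      simp [h, c2, c3, c4]
  refine ⟨c2, c3, c4, hw1, ?_⟩
  funext i
  have e1 := h1 i
  rw [congrFun c2 i, congrFun c3 i] at e1
  simp only [Pi.smul_apply, smul_eq_mul] at e1 ⊢
  field_simp at e1 ⊢
  linear_combination e1
end

section
/- For any real n×n matrix L, no real number λ with (λ−1)(λ² − 3λ + 1) = 0 is an eigenvalue of the path-whiskered matrix W₂(L): if W₂(L)·v = λ·v with such a λ, then v = 0. -/
open Matrix

theorem whisker2_excluded_eigenvalues {n : ℕ} (L : Matrix (Fin n) (Fin n) ℝ)
    (lam : ℝ) (hlam : (lam - 1) * (lam ^ 2 - 3 * lam + 1) = 0)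
    (v : (Fin n ⊕ Fin n) ⊕ (Fin n ⊕ Fin n) → ℝ)
    (heig : (whisker2 L).mulVec v = lam • v) :
    v = 0 := by
  have h2 : (2 : Matrix (Fin n) (Fin n) ℝ) = 1 + 1 := by norm_num
  have e1 : ∀ i : Fin n,
      ∑ x : Fin n, L i x * v (Sum.inl (Sum.inl x)) +
          (v (Sum.inl (Sum.inl i)) + v (Sum.inl (Sum.inl i))) +
          -v (Sum.inl (Sum.inr i)) + -v (Sum.inr (Sum.inl i)) =
        lam * v (Sum.inl (Sum.inl i)) := by
    intro i
    have h := congrFun heig (Sum.inl (Sum.inl i))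
    simpa [whisker2, mulVec, dotProduct, Fintype.sum_sum_type, h2, Matrix.one_apply,
      Matrix.add_apply, mul_ite, ite_mul, add_mul, mul_add, Finset.sum_ite_eq,
      Finset.sum_add_distrib] using h
  have e2 : ∀ i : Fin n,
      -v (Sum.inl (Sum.inl i)) + v (Sum.inl (Sum.inr i)) = lam * v (Sum.inl (Sum.inr i)) := by
    intro i
    have h := congrFun heig (Sum.inl (Sum.inr i))
    simpa [whisker2, mulVec, dotProduct, Fintype.sum_sum_type, h2, Matrix.one_apply,
      Matrix.add_apply, mul_ite, ite_mul, add_mul, mul_add, Finset.sum_ite_eq,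
      Finset.sum_add_distrib] using h
  have e3 : ∀ i : Fin n,
      -v (Sum.inl (Sum.inl i)) +
          (v (Sum.inr (Sum.inl i)) + v (Sum.inr (Sum.inl i)) + -v (Sum.inr (Sum.inr i))) =
        lam * v (Sum.inr (Sum.inl i)) := by
    intro i
    have h := congrFun heig (Sum.inr (Sum.inl i))
    simpa [whisker2, mulVec, dotProduct, Fintype.sum_sum_type, h2, Matrix.one_apply,
      Matrix.add_apply, mul_ite, ite_mul, add_mul, mul_add, Finset.sum_ite_eq,
      Finset.sum_add_distrib] using h
  have e4 : ∀ i : Fin n,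
      -v (Sum.inr (Sum.inl i)) + v (Sum.inr (Sum.inr i)) = lam * v (Sum.inr (Sum.inr i)) := by
    intro i
    have h := congrFun heig (Sum.inr (Sum.inr i))
    simpa [whisker2, mulVec, dotProduct, Fintype.sum_sum_type, h2, Matrix.one_apply,
      Matrix.add_apply, mul_ite, ite_mul, add_mul, mul_add, Finset.sum_ite_eq,
      Finset.sum_add_distrib] using h
  rcases mul_eq_zero.mp hlam with h1 | hq
  · -- lam = 1
    have hl : lam = 1 := by linarith
    subst hl
    have hx : ∀ i, v (Sum.inl (Sum.inl i)) = 0 := fun i => by have := e2 i; linarith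
    have hz : ∀ i, v (Sum.inr (Sum.inl i)) = 0 := fun i => by have := e4 i; linarith
    have hw : ∀ i, v (Sum.inr (Sum.inr i)) = 0 := fun i => by
      have := e3 i; have := hx i; have := hz i; linarith
    have hy : ∀ i, v (Sum.inl (Sum.inr i)) = 0 := fun i => by
      have h := e1 i
      have hs : ∑ x : Fin n, L i x * v (Sum.inl (Sum.inl x)) = 0 := by
        simp [hx]
      have := hx i; have := hz i; linarith
    funext s
    rcases s with (i | i) | (i | i)
    · exact hx i
    · exact hy i
    · exact hz i
    · exact hw i
  · -- lam^2 - 3 lam + 1 = 0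
    have hne : lam ≠ 1 := by
      intro h; rw [h] at hq; norm_num at hq
    have hfac : (1 : ℝ) - lam ≠ 0 := fun h => hne (by linarith)
    have hy : ∀ i, v (Sum.inl (Sum.inr i)) = 0 := by
      intro i
      have key : (1 - lam) * v (Sum.inl (Sum.inr i)) = 0 := by
        linear_combination e2 i - e3 i - (2 - lam) * e4 i + v (Sum.inr (Sum.inr i)) * hq
      exact (mul_eq_zero.mp key).resolve_left hfac
    have hx : ∀ i, v (Sum.inl (Sum.inl i)) = 0 := fun i => by
      have h := e2 i; rw [hy i] at h; linarith
    have hz : ∀ i, v (Sum.inr (Sum.inl i)) = 0 := fun i => by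
      have h := e1 i
      have hs : ∑ x : Fin n, L i x * v (Sum.inl (Sum.inl x)) = 0 := by
        simp [hx]
      rw [hx i, hy i] at h; linarith
    have hw : ∀ i, v (Sum.inr (Sum.inr i)) = 0 := by
      intro i
      have key : (1 - lam) * v (Sum.inr (Sum.inr i)) = 0 := by
        linear_combination e4 i + hz i
      exact (mul_eq_zero.mp key).resolve_left hfac
    funext s
    rcases s with (i | i) | (i | i)
    · exact hx i
    · exact hy i
    · exact hz i
    · exact hw i
end

section
/- Let L be a symmetric real n×n matrix, s ∈ ℝ, B a real n×r matrix, C a symmetric real r×r matrix, and L' = [[L + sI, B], [Bᵀ, C]] the (n+r)×(n+r) block matrix. Suppose w₁ ∈ ℝⁿ, β ∈ ℝʳ and Λ ∈ ℝ satisfy L'·[w₁ᵀ, βᵀ]ᵀ = Λ·[w₁ᵀ, βᵀ]ᵀ, that ΛI − C is invertible, and that w₁ is an eigenvector of B(ΛI − C)⁻¹Bᵀ, i.e. B(ΛI − C)⁻¹Bᵀ w₁ = μ w₁ for some μ ∈ ℝ. Then β = (ΛI − C)⁻¹Bᵀ w₁ and L w₁ = (Λ − s − μ) w₁; consequently, if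 in addition w₁ ≠ 0 and b₁ ∈ ℝⁿ satisfies w₁ᵀ b₁ = 0, then the pair (L, b₁) is uncontrollable. -/
open Matrix

theorem general_growth_restrict {n r : ℕ}
    (L : Matrix (Fin n) (Fin n) ℝ) (hL : L.IsSymm) (s : ℝ)
    (B : Matrix (Fin n) (Fin r) ℝ)
    (C : Matrix (Fin r) (Fin r) ℝ) (hC : C.IsSymm)
    (w₁ : Fin n → ℝ) (β : Fin r → ℝ) (Lam μ : ℝ) (b₁ : Fin n → ℝ)
    (heig : (Matrix.fromBlocks (L + s • 1) B Bᵀ C).mulVec (Sum.elim w₁ β)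
      = Lam • Sum.elim w₁ β)
    (hinv : IsUnit (Lam • (1 : Matrix (Fin r) (Fin r) ℝ) - C))
    (heigB : (B * (Lam • (1 : Matrix (Fin r) (Fin r) ℝ) - C)⁻¹ * Bᵀ).mulVec w₁
      = μ • w₁) :
    β = ((Lam • (1 : Matrix (Fin r) (Fin r) ℝ) - C)⁻¹ * Bᵀ).mulVec w₁ ∧
    L.mulVec w₁ = (Lam - s - μ) • w₁ ∧
    (w₁ ≠ 0 → w₁ ⬝ᵥ b₁ = 0 → Uncontrollable L b₁) := by
  rw [Matrix.fromBlocks_mulVec] at heig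
  have htop : (L + s • 1).mulVec w₁ + B.mulVec β = Lam • w₁ := by
    funext i; exact congrFun heig (Sum.inl i)
  have hbot : Bᵀ.mulVec w₁ + C.mulVec β = Lam • β := by
    funext i; exact congrFun heig (Sum.inr i)
  set M : Matrix (Fin r) (Fin r) ℝ := Lam • (1 : Matrix (Fin r) (Fin r) ℝ) - C with hM
  have hMβ : M.mulVec β = Bᵀ.mulVec w₁ := by
    rw [hM, Matrix.sub_mulVec, Matrix.smul_mulVec, Matrix.one_mulVec]
    rw [sub_eq_iff_eq_add, ← hbot]
  have hβ : β = (M⁻¹ * Bᵀ).mulVec w₁ := by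
    rw [← Matrix.mulVec_mulVec, ← hMβ, Matrix.mulVec_mulVec,
      Matrix.nonsing_inv_mul M ((Matrix.isUnit_iff_isUnit_det M).mp hinv),
      Matrix.one_mulVec]
  have hBβ : B.mulVec β = μ • w₁ := by
    rw [hβ, Matrix.mulVec_mulVec, ← Matrix.mul_assoc, heigB]
  have hLw : L.mulVec w₁ = (Lam - s - μ) • w₁ := by
    rw [Matrix.add_mulVec, Matrix.smul_mulVec, Matrix.one_mulVec, hBβ] at htop
    rw [sub_smul, sub_smul, eq_sub_iff_add_eq, eq_sub_iff_add_eq, ← htop]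
    abel
  refine ⟨hβ, hLw, fun hw hb => ⟨Lam - s - μ, w₁, hw, hLw, hb⟩⟩
end

section
/- Let L be a symmetric real n×n matrix, s ∈ ℝ, B a real n×r matrix, C a symmetric real r×r matrix, and L' = [[L + sI, B], [Bᵀ, C]] the (n+r)×(n+r) block matrix. Suppose w ∈ ℝⁿ is nonzero with L w = λ w and wᵀ b = 0 for some λ ∈ ℝ and b ∈ ℝⁿ, and suppose there exists Λ ∈ ℝ such that ΛI − C is invertible and B(ΛI − C)⁻¹Bᵀ w = (Λ − λ − s) w. Then, with β = (ΛI − C)⁻¹Bᵀ w, the vector [wᵀ, βᵀ]ᵀ is nonzero, satisfies L'·[wᵀ, βᵀ]ᵀ = Λ·[wᵀ, βᵀ]ᵀ, and is orthogonal to [bᵀ, 0ᵀ]ᵀ; consequently the pair (L', [bᵀ, 0ᵀ]ᵀ) is uncontrollable. -/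
open Matrix

theorem general_growth_lift {n r : ℕ}
    (L : Matrix (Fin n) (Fin n) ℝ) (hL : L.IsSymm) (s : ℝ)
    (B : Matrix (Fin n) (Fin r) ℝ)
    (C : Matrix (Fin r) (Fin r) ℝ) (hC : C.IsSymm)
    (w : Fin n → ℝ) (hw : w ≠ 0) (lam : ℝ) (b : Fin n → ℝ)
    (heig : L.mulVec w = lam • w) (horth : w ⬝ᵥ b = 0)
    (Lam : ℝ)
    (hinv : IsUnit (Lam • (1 : Matrix (Fin r) (Fin r) ℝ) - C))
    (hB : (B * (Lam • (1 : Matrix (Fin r) (Fin r) ℝ) - C)⁻¹ * Bᵀ).mulVec w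
      = (Lam - lam - s) • w) :
    Sum.elim w (((Lam • (1 : Matrix (Fin r) (Fin r) ℝ) - C)⁻¹ * Bᵀ).mulVec w) ≠ 0 ∧
    (Matrix.fromBlocks (L + s • 1) B Bᵀ C).mulVec
        (Sum.elim w (((Lam • (1 : Matrix (Fin r) (Fin r) ℝ) - C)⁻¹ * Bᵀ).mulVec w))
      = Lam • Sum.elim w
          (((Lam • (1 : Matrix (Fin r) (Fin r) ℝ) - C)⁻¹ * Bᵀ).mulVec w) ∧
    Sum.elim w (((Lam • (1 : Matrix (Fin r) (Fin r) ℝ) - C)⁻¹ * Bᵀ).mulVec w) ⬝ᵥ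
        Sum.elim b (0 : Fin r → ℝ) = 0 ∧
    Uncontrollable (Matrix.fromBlocks (L + s • 1) B Bᵀ C) (Sum.elim b 0) := by
  set M : Matrix (Fin r) (Fin r) ℝ := Lam • (1 : Matrix (Fin r) (Fin r) ℝ) - C with hM
  set β : Fin r → ℝ := (M⁻¹ * Bᵀ).mulVec w with hβ
  have hMβ : M.mulVec β = Bᵀ.mulVec w := by
    rw [hβ, mulVec_mulVec, ← Matrix.mul_assoc, Matrix.mul_nonsing_inv _
      ((Matrix.isUnit_iff_isUnit_det _).mp hinv), Matrix.one_mul]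
  have hne : Sum.elim w β ≠ 0 := by
    intro h
    apply hw
    funext i
    have := congrFun h (Sum.inl i)
    simpa using this
  have htop : B.mulVec β = (Lam - lam - s) • w := by
    rw [hβ, mulVec_mulVec, ← Matrix.mul_assoc]
    exact hB
  have hbot : Bᵀ.mulVec w + C.mulVec β = Lam • β := by
    have : (Lam • (1 : Matrix (Fin r) (Fin r) ℝ)).mulVec β - C.mulVec β = Bᵀ.mulVec w := by
      rw [← sub_mulVec]; exact hMβ
    rw [smul_mulVec, one_mulVec] at this
    rw [← this]; abel
  have hmul : (Matrix.fromBlocks (L + s • 1) B Bᵀ C).mulVec (Sum.elim w β)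
      = Lam • Sum.elim w β := by
    have := Matrix.fromBlocks_mulVec (L + s • 1) B Bᵀ C (Sum.elim w β)
    simp only [Sum.elim_comp_inl, Sum.elim_comp_inr] at this
    rw [this]
    funext i
    cases i with
    | inl i =>
      simp only [Sum.elim_inl, Pi.add_apply, Pi.smul_apply]
      have h1 : (L + s • 1).mulVec w = (lam + s) • w := by
        rw [add_mulVec, heig, smul_mulVec, one_mulVec, ← add_smul]
      rw [h1, htop]
      simp [smul_eq_mul]; ring
    | inr i =>
      simp only [Sum.elim_inr, Pi.add_apply, Pi.smul_apply]
      have := congrFun hbot i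
      simpa using this
  have hdot : Sum.elim w β ⬝ᵥ Sum.elim b (0 : Fin r → ℝ) = 0 := by
    rw [sumElim_dotProduct_sumElim, horth, dotProduct_zero, add_zero]
  exact ⟨hne, hmul, hdot, Lam, Sum.elim w β, hne, hmul, hdot⟩
end

section
/- Let L ∈ ℝ^{n×n} be the Laplacian of a connected undirected graph (symmetric positive semidefinite, zero row sums, nonpositive off-diagonal entries, with grounded Laplacian L[2:n] positive definite), and let L' = W₁(L) = [[L+I, −I], [−I, I]] be its 2n×2n whiskered matrix. Then the grounded matrix L'[2:2n] (delete the first row and column of L') is positive definite, and Tr((L'[2:2n])⁻¹) ≥ n + Tr((L[2:n] + I)⁻¹); equivalently, the controllability Gramian P' = ½(L'[2:2n])⁻¹ satisfies Tr(P') ≥ (n + C₁)/2 with C₁ = Tr((L[2:n] + I)⁻¹). -/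
open Matrix

section Aux

lemma trace_submatrix_equiv' {l m : Type*} [Fintype l] [Fintype m]
    (A : Matrix m m ℝ) (e : l ≃ m) : (A.submatrix e e).trace = A.trace := by
  simp only [Matrix.trace, Matrix.diag, submatrix_apply]
  exact Fintype.sum_equiv e _ _ (fun i => rfl)

lemma posDef_submatrix_equiv' {l m : Type*} [Fintype l] [Fintype m]
    {A : Matrix m m ℝ} (hA : A.PosDef) (e : l ≃ m) : (A.submatrix e e).PosDef := by
  refine Matrix.posDef_iff_dotProduct_mulVec.mpr ⟨(isHermitian_submatrix_equiv e).2 hA.1, fun x hx => ?_⟩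
  have hx' : x ∘ e.symm ≠ 0 := by
    intro h; apply hx; funext i
    have := congrFun h (e i); simpa using this
  have h := hA.dotProduct_mulVec_pos hx'
  rw [submatrix_mulVec_equiv]
  convert h using 1
  simp only [dotProduct, Function.comp]
  exact Fintype.sum_equiv e _ _ (fun i => by simp)

lemma posDef_of_posSemidef_isUnit {m : Type*} [Fintype m] [DecidableEq m]
    {A : Matrix m m ℝ} (h : A.PosSemidef) (hdet : IsUnit A.det) : A.PosDef := by
  refine Matrix.posDef_iff_dotProduct_mulVec.mpr ⟨h.1, fun x hx => ?_⟩
  rcases (h.dotProduct_mulVec_nonneg x).lt_or_eq with hlt | heq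
  · exact hlt
  · exfalso
    apply hx
    have h0 : A *ᵥ x = 0 := (h.dotProduct_mulVec_zero_iff x).mp heq.symm
    have : A⁻¹ *ᵥ (A *ᵥ x) = x := by
      rw [mulVec_mulVec, Matrix.nonsing_inv_mul _ hdet, one_mulVec]
    rw [h0, mulVec_zero] at this
    exact this.symm

lemma trace_nonneg_of_posSemidef {m : Type*} [Fintype m] [DecidableEq m]
    {A : Matrix m m ℝ} (h : A.PosSemidef) : 0 ≤ A.trace := by
  refine Finset.sum_nonneg fun i _ => ?_
  have := h.dotProduct_mulVec_nonneg (Pi.single i 1)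
  simpa [dotProduct_mulVec, single_dotProduct, mulVec_single, Matrix.diag] using this

/-- the grounding equivalence -/
def groundEquiv {n : ℕ} (i₀ : Fin n) :
    {i : Fin n ⊕ Fin n // i ≠ Sum.inl i₀} ≃ ({i : Fin n // i ≠ i₀} ⊕ Fin n) where
  toFun x := match x with
    | ⟨Sum.inl i, h⟩ => Sum.inl ⟨i, fun hi => h (by rw [hi])⟩
    | ⟨Sum.inr j, _⟩ => Sum.inr j
  invFun y := match y with
    | Sum.inl ⟨i, hi⟩ => ⟨Sum.inl i, fun h => hi (by injection h)⟩
    | Sum.inr j => ⟨Sum.inr j, by simp⟩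
  left_inv x := by rcases x with ⟨(i | j), h⟩ <;> rfl
  right_inv y := by rcases y with (⟨i, hi⟩ | j) <;> rfl

end Aux

/-- The principal submatrix of `A` obtained by deleting the row and column
indexed by `i₀` (grounding at node `i₀`). -/
def dropIdx {m : Type*} (i₀ : m) (A : Matrix m m ℝ) :
    Matrix {i : m // i ≠ i₀} {i : m // i ≠ i₀} ℝ :=
  A.submatrix Subtype.val Subtype.val

theorem whisker1_gramian_bound {n : ℕ} (hn : 0 < n)
    (L : Matrix (Fin n) (Fin n) ℝ)
    (hsym : L.IsSymm) (hpsd : L.PosSemidef)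
    (hrow : ∀ i, ∑ j, L i j = 0)
    (hoff : ∀ i j, i ≠ j → L i j ≤ 0)
    (hground : (dropIdx (⟨0, hn⟩ : Fin n) L).PosDef) :
    (dropIdx (Sum.inl ⟨0, hn⟩ : Fin n ⊕ Fin n) (whisker1 L)).PosDef ∧
    Matrix.trace ((dropIdx (Sum.inl ⟨0, hn⟩ : Fin n ⊕ Fin n) (whisker1 L))⁻¹)
      ≥ (n : ℝ) + Matrix.trace ((dropIdx (⟨0, hn⟩ : Fin n) L + 1)⁻¹) ∧
    Matrix.trace
        ((2 : ℝ)⁻¹ • (dropIdx (Sum.inl ⟨0, hn⟩ : Fin n ⊕ Fin n) (whisker1 L))⁻¹)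
      ≥ ((n : ℝ) + Matrix.trace ((dropIdx (⟨0, hn⟩ : Fin n) L + 1)⁻¹)) / 2 := by
  classical
  set i₀ : Fin n := ⟨0, hn⟩ with hi₀
  set M : Matrix {i : Fin n // i ≠ i₀} {i : Fin n // i ≠ i₀} ℝ := dropIdx i₀ L with hMdef
  set E : Matrix {i : Fin n // i ≠ i₀} (Fin n) ℝ :=
    (1 : Matrix (Fin n) (Fin n) ℝ).submatrix Subtype.val id with hEdef
  have hEET : E * Eᵀ = 1 := by
    ext a b
    simp only [hEdef, mul_apply, transpose_apply, submatrix_apply, id_eq, one_apply]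
    rw [Finset.sum_eq_single (a : Fin n)]
    · by_cases h : a = b
      · simp [h]
      · have : (a : Fin n) ≠ (b : Fin n) := fun hv => h (Subtype.ext hv)
        simp [this.symm, h]
    · intro j _ hj; simp [Ne.symm hj]
    · intro h; exact absurd (Finset.mem_univ _) h
  have hMunit : IsUnit M.det := hground.det_pos.ne'.isUnit
  have hMinv : M * M⁻¹ = 1 := Matrix.mul_nonsing_inv M hMunit
  -- handy cancellation lemmas
  have hEmul : ∀ {p : Type} [Fintype p] (X : Matrix {i : Fin n // i ≠ i₀} p ℝ), E * (Eᵀ * X) = X := by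
    intro p _ X; rw [← Matrix.mul_assoc, hEET, Matrix.one_mul]
  have hMmul : ∀ {p : Type} [Fintype p] (X : Matrix {i : Fin n // i ≠ i₀} p ℝ),
      M * (M⁻¹ * X) = X := by
    intro p _ X; rw [← Matrix.mul_assoc, hMinv, Matrix.one_mul]
  set F : Matrix ({i : Fin n // i ≠ i₀} ⊕ Fin n) ({i : Fin n // i ≠ i₀} ⊕ Fin n) ℝ :=
    fromBlocks (M + 1) (-E) (-Eᵀ) (1 : Matrix (Fin n) (Fin n) ℝ) with hFdef
  set X : Matrix ({i : Fin n // i ≠ i₀} ⊕ Fin n) ({i : Fin n // i ≠ i₀} ⊕ Fin n) ℝ :=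
    fromBlocks M⁻¹ (M⁻¹ * E) (Eᵀ * M⁻¹) (1 + Eᵀ * (M⁻¹ * E)) with hXdef
  have hTL : (M + 1) * M⁻¹ + (-E) * (Eᵀ * M⁻¹) = 1 := by
    rw [Matrix.add_mul, Matrix.one_mul, hMinv, Matrix.neg_mul, hEmul M⁻¹,
      add_neg_cancel_right]
  have hTR : (M + 1) * (M⁻¹ * E) + (-E) * (1 + Eᵀ * (M⁻¹ * E)) = 0 := by
    rw [Matrix.add_mul, Matrix.one_mul, hMmul, Matrix.neg_mul, Matrix.mul_add,
      Matrix.mul_one, hEmul, add_neg_cancel]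
  have hBL : (-Eᵀ) * M⁻¹ + (1 : Matrix (Fin n) (Fin n) ℝ) * (Eᵀ * M⁻¹) = 0 := by
    rw [Matrix.one_mul, Matrix.neg_mul, neg_add_cancel]
  have hBR : (-Eᵀ) * (M⁻¹ * E) + (1 : Matrix (Fin n) (Fin n) ℝ) * (1 + Eᵀ * (M⁻¹ * E)) = 1 := by
    rw [Matrix.one_mul, Matrix.neg_mul,
      add_comm (1 : Matrix (Fin n) (Fin n) ℝ) (Eᵀ * (M⁻¹ * E)), neg_add_cancel_left]
  have hFX : F * X = 1 := by
    rw [hFdef, hXdef, fromBlocks_multiply, hTL, hTR, hBL, hBR, fromBlocks_one]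
  -- the grounded whiskered matrix as a reindexing of F
  have hdrop : dropIdx (Sum.inl i₀ : Fin n ⊕ Fin n) (whisker1 L)
      = F.submatrix (groundEquiv i₀) (groundEquiv i₀) := by
    rw [hFdef, hMdef, hEdef]
    ext a b
    rcases a with ⟨(i | i), ha⟩ <;> rcases b with ⟨(j | j), hb⟩ <;>
      simp [dropIdx, whisker1, groundEquiv, Matrix.one_apply, Subtype.ext_iff, eq_comm]
  -- positive definiteness of F
  have hHerm : (-E)ᴴ = -Eᵀ := by
    ext a b; simp [conjTranspose_apply]
  have hFpsd : F.PosSemidef := by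
    rw [hFdef, ← hHerm]
    haveI : Invertible (1 : Matrix (Fin n) (Fin n) ℝ) := invertibleOne
    rw [Matrix.PosDef.fromBlocks₂₂ _ _ Matrix.PosDef.one]
    have : M + 1 - -E * (1 : Matrix (Fin n) (Fin n) ℝ)⁻¹ * (-E)ᴴ = M := by
      rw [hHerm, inv_one, Matrix.mul_one, Matrix.neg_mul, Matrix.mul_neg, neg_neg, hEET]
      abel
    rw [this]
    exact hground.posSemidef
  have hFunit : IsUnit F.det := Matrix.isUnit_det_of_right_inverse hFX
  have hFpd : F.PosDef := posDef_of_posSemidef_isUnit hFpsd hFunit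
  have hApd : (dropIdx (Sum.inl i₀ : Fin n ⊕ Fin n) (whisker1 L)).PosDef := by
    rw [hdrop]; exact posDef_submatrix_equiv' hFpd _
  -- trace computation
  have hFinv : F⁻¹ = X := Matrix.inv_eq_right_inv hFX
  have htraceA : Matrix.trace ((dropIdx (Sum.inl i₀ : Fin n ⊕ Fin n) (whisker1 L))⁻¹)
      = 2 * Matrix.trace M⁻¹ + n := by
    rw [hdrop, Matrix.inv_submatrix_equiv, trace_submatrix_equiv', hFinv, hXdef]
    rw [show (fromBlocks M⁻¹ (M⁻¹ * E) (Eᵀ * M⁻¹) (1 + Eᵀ * (M⁻¹ * E))).trace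
        = M⁻¹.trace + (1 + Eᵀ * (M⁻¹ * E)).trace from ?_]
    · rw [Matrix.trace_add, Matrix.trace_one, ← Matrix.mul_assoc,
        Matrix.trace_mul_comm (Eᵀ * M⁻¹) E, ← Matrix.mul_assoc, hEET, Matrix.one_mul]
      simp [Fintype.card_fin]; ring
    · simp [Matrix.trace, Matrix.diag, Fintype.sum_sum_type]
  -- trace comparison : trace (M+1)⁻¹ ≤ trace M⁻¹
  have hM1pd : (M + 1).PosDef := hground.add_posSemidef Matrix.PosSemidef.one
  have hM1unit : IsUnit (M + 1).det := hM1pd.det_pos.ne'.isUnit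
  have hMinvpsd : (M⁻¹).PosSemidef := hground.posSemidef.inv
  have hdiff : M⁻¹ - (M + 1)⁻¹ = (M + 1)⁻¹ * M⁻¹ := by
    have key : (M + 1) * (M⁻¹ - (M + 1)⁻¹) = M⁻¹ := by
      rw [Matrix.mul_sub, Matrix.mul_nonsing_inv _ hM1unit, Matrix.add_mul,
        hMinv, Matrix.one_mul]
      abel
    calc M⁻¹ - (M + 1)⁻¹
        = (M + 1)⁻¹ * ((M + 1) * (M⁻¹ - (M + 1)⁻¹)) := by
          rw [← Matrix.mul_assoc, Matrix.nonsing_inv_mul _ hM1unit, Matrix.one_mul]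
      _ = (M + 1)⁻¹ * M⁻¹ := by rw [key]
  have hprodpd : (M * (M + 1)).PosDef := by
    have : M * (M + 1) = Mᴴ * M + M := by
      rw [Matrix.mul_add, Matrix.mul_one, hground.isHermitian.eq]
    rw [this]
    exact Matrix.PosDef.posSemidef_add (Matrix.posSemidef_conjTranspose_mul_self M) hground
  have hcmp : Matrix.trace ((M + 1)⁻¹) ≤ Matrix.trace M⁻¹ := by
    have h1 : (M⁻¹ - (M + 1)⁻¹).trace = ((M * (M + 1))⁻¹).trace := by
      rw [hdiff, Matrix.mul_inv_rev]
    have h2 : 0 ≤ ((M * (M + 1))⁻¹).trace :=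
      trace_nonneg_of_posSemidef hprodpd.inv.posSemidef
    have := h1 ▸ h2
    rw [Matrix.trace_sub] at this
    linarith
  have hnn : 0 ≤ Matrix.trace M⁻¹ := trace_nonneg_of_posSemidef hMinvpsd
  refine ⟨hApd, ?_, ?_⟩
  · rw [htraceA]
    have : Matrix.trace ((dropIdx i₀ L + 1)⁻¹) = Matrix.trace ((M + 1)⁻¹) := by rw [hMdef]
    rw [this]; linarith
  · rw [Matrix.trace_smul, htraceA]
    have : Matrix.trace ((dropIdx i₀ L + 1)⁻¹) = Matrix.trace ((M + 1)⁻¹) := by rw [hMdef]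
    rw [this]
    simp only [smul_eq_mul]
    linarith
end

section
/- Let L ∈ ℝ^{n×n} be the Laplacian of a connected undirected graph (symmetric positive semidefinite, zero row sums, nonpositive off-diagonal entries, with grounded Laplacian L[2:n] positive definite), and let L'' = W₂(L) be its 4n×4n path-whiskered matrix. Then the grounded matrix L''[2:4n] (delete the first row and column of L'') is positive definite, and Tr((L''[2:4n])⁻¹) ≥ 4n + Tr((L[2:n] + 2I)⁻¹); equivalently, the controllability Gramian P'' = ½(L''[2:4n])⁻¹ satisfies Tr(P'') ≥ (4n + C₂)/2 with C₂ = Tr((L[2:n] + 2I)⁻¹). -/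
open Matrix

section Helpers

lemma sum_of_inj {α β : Type*} [Fintype α] [Fintype β] [DecidableEq β]
    (φ : α → β) (hφ : Function.Injective φ) (f : β → ℝ)
    (h0 : ∀ b, (∀ a, φ a ≠ b) → f b = 0) :
    ∑ b, f b = ∑ a, f (φ a) := by
  rw [← Finset.sum_image (f := f) (g := φ) (fun a _ b _ h => hφ h)]
  refine (Finset.sum_subset (Finset.subset_univ _) ?_).symm
  intro b _ hb
  refine h0 b fun a h => hb ?_
  rw [Finset.mem_image]; exact ⟨a, Finset.mem_univ a, h⟩

lemma dot_dropIdx {m : Type*} [Fintype m] [DecidableEq m] (g : m) (W : Matrix m m ℝ)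
    (x : {i : m // i ≠ g} → ℝ) (z : m → ℝ) (hzg : z g = 0)
    (hz : ∀ i : {i : m // i ≠ g}, z i.val = x i) :
    x ⬝ᵥ (dropIdx g W) *ᵥ x = z ⬝ᵥ W *ᵥ z := by
  have hval : Function.Injective (Subtype.val : {i : m // i ≠ g} → m) :=
    Subtype.val_injective
  have hv0 : ∀ b, (∀ a : {i : m // i ≠ g}, a.val ≠ b) → z b * (W *ᵥ z) b = 0 := by
    intro b hb
    have : b = g := by by_contra h; exact hb ⟨b, h⟩ rfl
    simp [this, hzg]
  have h1 : ∀ i : {i : m // i ≠ g}, (W *ᵥ z) i.val = ((dropIdx g W) *ᵥ x) i := by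
    intro i
    show ∑ j, W i.val j * z j = _
    rw [sum_of_inj Subtype.val hval (fun j => W i.val j * z j)
      (by intro b hb; have : b = g := by by_contra h; exact hb ⟨b, h⟩ rfl
          simp [this, hzg])]
    simp only [hz]
    rfl
  symm
  show ∑ p, z p * (W *ᵥ z) p = _
  rw [sum_of_inj Subtype.val hval (fun p => z p * (W *ᵥ z) p) hv0]
  exact Finset.sum_congr rfl fun i _ => by rw [hz, h1]

lemma two_mulVec {k : Type*} [Fintype k] [DecidableEq k] (v : k → ℝ) :
    (2 : Matrix k k ℝ) *ᵥ v = v + v := by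
  rw [show (2 : Matrix k k ℝ) = 1 + 1 by norm_num, Matrix.add_mulVec, Matrix.one_mulVec]

lemma two_transpose {k : Type*} [DecidableEq k] : (2 : Matrix k k ℝ)ᵀ = 2 := by
  rw [show (2 : Matrix k k ℝ) = 1 + 1 by norm_num, Matrix.transpose_add, Matrix.transpose_one]

lemma two_apply {k : Type*} [DecidableEq k] (i j : k) :
    (2 : Matrix k k ℝ) i j = if i = j then 2 else 0 := by
  rw [show (2 : Matrix k k ℝ) = 1 + 1 by norm_num]
  simp only [Matrix.add_apply, Matrix.one_apply]
  split <;> norm_num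

lemma two_posDef {k : Type*} [Fintype k] [DecidableEq k] : (2 : Matrix k k ℝ).PosDef := by
  have h : (2 : Matrix k k ℝ) = Matrix.diagonal (fun _ => 2) := by
    rw [show (2 : Matrix k k ℝ) = 1 + 1 by norm_num, ← Matrix.diagonal_one,
      Matrix.diagonal_add]
    norm_num
  rw [h]
  exact Matrix.posDef_diagonal_iff.mpr (fun _ => by norm_num)

lemma whisker2_isSymm {n : ℕ} {L : Matrix (Fin n) (Fin n) ℝ} (hsym : L.IsSymm) :
    (whisker2 L).IsSymm := by
  unfold Matrix.IsSymm whisker2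
  simp only [Matrix.fromBlocks_transpose, Matrix.transpose_add, Matrix.transpose_neg,
    Matrix.transpose_one, Matrix.transpose_zero, two_transpose, hsym.eq]

lemma whisker2_quadform {n : ℕ} (L : Matrix (Fin n) (Fin n) ℝ) (a b c d : Fin n → ℝ) :
    (Sum.elim (Sum.elim a b) (Sum.elim c d)) ⬝ᵥ
      (whisker2 L) *ᵥ (Sum.elim (Sum.elim a b) (Sum.elim c d)) =
    a ⬝ᵥ L *ᵥ a + ((a - b) ⬝ᵥ (a - b) + (a - c) ⬝ᵥ (a - c) + (c - d) ⬝ᵥ (c - d)) := by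
  rw [whisker2]
  simp only [Matrix.fromBlocks_mulVec, Sum.elim_comp_inl, Sum.elim_comp_inr]
  simp only [Matrix.add_mulVec, Matrix.neg_mulVec, Matrix.one_mulVec, Matrix.zero_mulVec,
    two_mulVec, dotProduct_add, sumElim_dotProduct_sumElim, dotProduct_neg,
    dotProduct_sub, sub_dotProduct, dotProduct_zero, add_dotProduct, neg_dotProduct]
  rw [dotProduct_comm b a, dotProduct_comm c a, dotProduct_comm d c]
  ring

lemma symm_dot {k : Type*} [Fintype k] {A : Matrix k k ℝ} (hA : A.IsHermitian)
    (x y : k → ℝ) : x ⬝ᵥ A *ᵥ y = y ⬝ᵥ A *ᵥ x := by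
  have hT : Aᵀ = A := by
    have := hA; rwa [Matrix.IsHermitian, Matrix.conjTranspose_eq_transpose_of_trivial] at this
  rw [Matrix.dotProduct_mulVec, ← Matrix.mulVec_transpose, hT, dotProduct_comm]

lemma var_bound {k : Type*} [Fintype k] [DecidableEq k] {A : Matrix k k ℝ}
    (hA : A.PosDef) (v w : k → ℝ) :
    2 * (v ⬝ᵥ w) - v ⬝ᵥ A *ᵥ v ≤ w ⬝ᵥ A⁻¹ *ᵥ w := by
  have hinv : A *ᵥ (A⁻¹ *ᵥ w) = w := by
    rw [Matrix.mulVec_mulVec, Matrix.mul_nonsing_inv A hA.det_pos.ne'.isUnit, Matrix.one_mulVec]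
  set u := v - A⁻¹ *ᵥ w with hu
  have h0 : 0 ≤ u ⬝ᵥ A *ᵥ u := by
    have := hA.posSemidef.dotProduct_mulVec_nonneg u
    simpa using this
  have hexp : u ⬝ᵥ A *ᵥ u
      = v ⬝ᵥ A *ᵥ v - 2 * (v ⬝ᵥ w) + w ⬝ᵥ A⁻¹ *ᵥ w := by
    rw [hu]
    rw [Matrix.mulVec_sub, sub_dotProduct, dotProduct_sub, dotProduct_sub,
      hinv]
    have h1 : (A⁻¹ *ᵥ w) ⬝ᵥ A *ᵥ v = v ⬝ᵥ w := by
      rw [symm_dot hA.isHermitian, hinv]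
    have h2 : (A⁻¹ *ᵥ w) ⬝ᵥ w = w ⬝ᵥ A⁻¹ *ᵥ w := dotProduct_comm _ _
    rw [h1, h2]
    ring
  linarith

lemma dot_self_nonneg {k : Type*} [Fintype k] (v : k → ℝ) : 0 ≤ v ⬝ᵥ v :=
  Finset.sum_nonneg fun _ _ => mul_self_nonneg _

end Helpers

section Main

variable {n : ℕ}

/-- grounded whiskered matrix is positive definite -/
lemma whisker2_grounded_posDef (L : Matrix (Fin n) (Fin n) ℝ) (i0 : Fin n)
    (hsym : L.IsSymm) (hpsd : L.PosSemidef)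
    (hground : (dropIdx i0 L).PosDef) :
    (dropIdx (Sum.inl (Sum.inl i0) : (Fin n ⊕ Fin n) ⊕ (Fin n ⊕ Fin n))
      (whisker2 L)).PosDef := by
  set g : (Fin n ⊕ Fin n) ⊕ (Fin n ⊕ Fin n) := Sum.inl (Sum.inl i0) with hg
  refine Matrix.PosDef.of_dotProduct_mulVec_pos ?_ ?_
  · -- Hermitian
    have hw := whisker2_isSymm hsym
    show (dropIdx g (whisker2 L))ᴴ = dropIdx g (whisker2 L)
    ext p q
    simp only [Matrix.conjTranspose_apply, dropIdx, Matrix.submatrix_apply, star_trivial]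
    exact hw.apply _ _
  · intro x hx
    set a : Fin n → ℝ := fun i =>
      if h : i = i0 then 0 else x ⟨Sum.inl (Sum.inl i), fun hc => h (by
        rw [hg] at hc
        exact Sum.inl_injective (Sum.inl_injective hc))⟩ with ha
    set b : Fin n → ℝ := fun i => x ⟨Sum.inl (Sum.inr i), by simp [hg]⟩ with hb
    set c : Fin n → ℝ := fun i => x ⟨Sum.inr (Sum.inl i), by simp [hg]⟩ with hc
    set d : Fin n → ℝ := fun i => x ⟨Sum.inr (Sum.inr i), by simp [hg]⟩ with hd
    set z : (Fin n ⊕ Fin n) ⊕ (Fin n ⊕ Fin n) → ℝ :=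
      Sum.elim (Sum.elim a b) (Sum.elim c d) with hzdef
    have hz0 : z g = 0 := by simp [hzdef, hg, ha]
    have hzv : ∀ p : {p : (Fin n ⊕ Fin n) ⊕ (Fin n ⊕ Fin n) // p ≠ g}, z p.val = x p := by
      rintro ⟨(i | i) | (i | i), hp⟩
      · have hi : i ≠ i0 := fun h => hp (by rw [h, hg])
        simp only [hzdef, Sum.elim_inl, ha, dif_neg hi]
      · exact congrArg x (Subtype.ext rfl)
      · exact congrArg x (Subtype.ext rfl)
      · exact congrArg x (Subtype.ext rfl)
    have hQ : x ⬝ᵥ (dropIdx g (whisker2 L)) *ᵥ x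
        = a ⬝ᵥ L *ᵥ a + ((a - b) ⬝ᵥ (a - b) + (a - c) ⬝ᵥ (a - c) + (c - d) ⬝ᵥ (c - d)) := by
      rw [dot_dropIdx g (whisker2 L) x z hz0 hzv, hzdef, whisker2_quadform]
    have hLnn : 0 ≤ a ⬝ᵥ L *ᵥ a := by simpa using hpsd.dotProduct_mulVec_nonneg a
    have hnn : 0 ≤ x ⬝ᵥ (dropIdx g (whisker2 L)) *ᵥ x := by
      rw [hQ]
      have := dot_self_nonneg (a - b); have := dot_self_nonneg (a - c)
      have := dot_self_nonneg (c - d)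
      linarith
    have hne : x ⬝ᵥ (dropIdx g (whisker2 L)) *ᵥ x ≠ 0 := by
      intro h0
      rw [hQ] at h0
      have h1 := dot_self_nonneg (a - b)
      have h2 := dot_self_nonneg (a - c)
      have h3 := dot_self_nonneg (c - d)
      have hab : (a - b) ⬝ᵥ (a - b) = 0 := by linarith
      have hac : (a - c) ⬝ᵥ (a - c) = 0 := by linarith
      have hcd : (c - d) ⬝ᵥ (c - d) = 0 := by linarith
      have hLa : a ⬝ᵥ L *ᵥ a = 0 := by linarith
      have hab' : a = b := by
        have := dotProduct_self_eq_zero.mp hab; rwa [sub_eq_zero] at this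
      have hac' : a = c := by
        have := dotProduct_self_eq_zero.mp hac; rwa [sub_eq_zero] at this
      have hcd' : c = d := by
        have := dotProduct_self_eq_zero.mp hcd; rwa [sub_eq_zero] at this
      -- restrict a to the grounded indices
      set a' : {i : Fin n // i ≠ i0} → ℝ := fun i => a i.val with ha'
      have hrest : a' ⬝ᵥ (dropIdx i0 L) *ᵥ a' = a ⬝ᵥ L *ᵥ a :=
        dot_dropIdx i0 L a' a (by simp [ha]) (fun i => rfl)
      have ha'0 : a' = 0 := by
        by_contra hne'
        have := hground.dotProduct_mulVec_pos hne'
        rw [star_trivial, hrest, hLa] at this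
        exact lt_irrefl 0 this
      have ha0 : a = 0 := by
        funext i
        by_cases h : i = i0
        · simp [ha, h]
        · have : a' ⟨i, h⟩ = 0 := by rw [ha'0]; rfl
          simpa [ha'] using this
      apply hx
      funext p
      have := hzv p
      rw [← this, hzdef]
      obtain ⟨(i | i) | (i | i), hp⟩ := p
      · simp [ha0]
      · simp [← hab', ha0]
      · simp [← hac', ha0]
      · simp [← hcd', ← hac', ha0]
    have : 0 < x ⬝ᵥ (dropIdx g (whisker2 L)) *ᵥ x := lt_of_le_of_ne hnn (Ne.symm hne)
    simpa using this

end Main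

section Trace

variable {n : ℕ}

lemma single_quad {k : Type*} [Fintype k] [DecidableEq k] (B : Matrix k k ℝ) (p : k) :
    Pi.single p 1 ⬝ᵥ B *ᵥ Pi.single p 1 = B p p := by
  rw [Matrix.mulVec_single, single_dotProduct]
  simp

lemma pair_quad {k : Type*} [Fintype k] [DecidableEq k] (B : Matrix k k ℝ) (p q : k)
    (α β : ℝ) :
    (Pi.single p α + Pi.single q β) ⬝ᵥ B *ᵥ (Pi.single p α + Pi.single q β)
      = α * (B p p * α + B p q * β) + β * (B q p * α + B q q * β) := by
  rw [Matrix.mulVec_add, Matrix.mulVec_single, Matrix.mulVec_single, add_dotProduct,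
    single_dotProduct, single_dotProduct]
  simp [Pi.add_apply]
  ring

lemma whisker2_trace_bound (L : Matrix (Fin n) (Fin n) ℝ) (i0 : Fin n)
    (hsym : L.IsSymm) (hpsd : L.PosSemidef)
    (hground : (dropIdx i0 L).PosDef) :
    Matrix.trace ((dropIdx (Sum.inl (Sum.inl i0) : (Fin n ⊕ Fin n) ⊕ (Fin n ⊕ Fin n))
        (whisker2 L))⁻¹)
      ≥ 4 * (n : ℝ) + Matrix.trace ((dropIdx i0 L + 2)⁻¹) := by
  set g : (Fin n ⊕ Fin n) ⊕ (Fin n ⊕ Fin n) := Sum.inl (Sum.inl i0) with hg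
  set A := dropIdx g (whisker2 L) with hAdef
  have hA : A.PosDef := whisker2_grounded_posDef L i0 hsym hpsd hground
  set M := dropIdx i0 L + 2 with hMdef
  have hM : M.PosDef := Matrix.PosDef.add hground two_posDef
  set f : {p : (Fin n ⊕ Fin n) ⊕ (Fin n ⊕ Fin n) // p ≠ g} → ℝ := fun p => A⁻¹ p p with hf
  -- original-node bound
  have hb1 : ∀ (j : {i : Fin n // i ≠ i0}) (hp : (Sum.inl (Sum.inl j.val) :
      (Fin n ⊕ Fin n) ⊕ (Fin n ⊕ Fin n)) ≠ g),
      M⁻¹ j j ≤ f ⟨Sum.inl (Sum.inl j.val), hp⟩ := by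
    intro j hp
    set p : {p : (Fin n ⊕ Fin n) ⊕ (Fin n ⊕ Fin n) // p ≠ g} :=
      ⟨Sum.inl (Sum.inl j.val), hp⟩ with hpdef
    set u : {i : Fin n // i ≠ i0} → ℝ := M⁻¹ *ᵥ Pi.single j 1 with hu
    set a0 : Fin n → ℝ := fun i => if h : i = i0 then 0 else u ⟨i, h⟩ with ha0
    set z0 : (Fin n ⊕ Fin n) ⊕ (Fin n ⊕ Fin n) → ℝ :=
      Sum.elim (Sum.elim a0 (0 : Fin n → ℝ)) (Sum.elim (0 : Fin n → ℝ) 0) with hz0def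
    set v : {p : (Fin n ⊕ Fin n) ⊕ (Fin n ⊕ Fin n) // p ≠ g} → ℝ :=
      fun q => z0 q.val with hv
    have hMu : M *ᵥ u = Pi.single j 1 := by
      rw [hu, Matrix.mulVec_mulVec, Matrix.mul_nonsing_inv _ hM.det_pos.ne'.isUnit,
        Matrix.one_mulVec]
    have haj : ∀ jj : {i : Fin n // i ≠ i0}, a0 jj.val = u jj := by
      intro jj
      rw [ha0]
      simp only [dif_neg jj.2]
    have ha0i0 : a0 i0 = 0 := by simp [ha0]
    have e1 : v ⬝ᵥ A *ᵥ v = z0 ⬝ᵥ (whisker2 L) *ᵥ z0 :=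
      dot_dropIdx g (whisker2 L) v z0 (by simp [hz0def, hg, ha0i0]) (fun q => rfl)
    have e2 : z0 ⬝ᵥ (whisker2 L) *ᵥ z0 = a0 ⬝ᵥ L *ᵥ a0 + (a0 ⬝ᵥ a0 + a0 ⬝ᵥ a0) := by
      rw [hz0def, whisker2_quadform]
      simp
    have e3 : u ⬝ᵥ (dropIdx i0 L) *ᵥ u = a0 ⬝ᵥ L *ᵥ a0 :=
      dot_dropIdx i0 L u a0 ha0i0 haj
    have e4 : a0 ⬝ᵥ a0 = u ⬝ᵥ u := by
      show ∑ i, a0 i * a0 i = ∑ jj, u jj * u jj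
      rw [sum_of_inj Subtype.val Subtype.val_injective (fun i => a0 i * a0 i)
        (by intro bb hb
            have : bb = i0 := by by_contra h; exact hb ⟨bb, h⟩ rfl
            simp [this, ha0i0])]
      exact Finset.sum_congr rfl fun jj _ => by rw [haj]
    have e5 : u ⬝ᵥ M *ᵥ u = u ⬝ᵥ (dropIdx i0 L) *ᵥ u + (u ⬝ᵥ u + u ⬝ᵥ u) := by
      rw [hMdef, Matrix.add_mulVec, two_mulVec, dotProduct_add, dotProduct_add]
    have hvA : v ⬝ᵥ A *ᵥ v = u ⬝ᵥ M *ᵥ u := by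
      rw [e1, e2, e5, e3, e4]
    have huMu : u ⬝ᵥ M *ᵥ u = u j := by
      rw [hMu, dotProduct_single, mul_one]
    have hvp : v p = u j := haj j
    have hvw : v ⬝ᵥ Pi.single p 1 = u j := by
      rw [dotProduct_single, mul_one, hvp]
    have hvar := var_bound hA v (Pi.single p 1)
    rw [single_quad, hvw, hvA, huMu] at hvar
    have huj : u j = M⁻¹ j j := by
      rw [hu, Matrix.mulVec_single]
      simp
    rw [hf]
    rw [huj] at hvar
    linarith
  -- pendant-node bound
  have hb2 : ∀ (i : Fin n) (hp : (Sum.inl (Sum.inr i) :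
      (Fin n ⊕ Fin n) ⊕ (Fin n ⊕ Fin n)) ≠ g),
      (1 : ℝ) ≤ f ⟨Sum.inl (Sum.inr i), hp⟩ := by
    intro i hp
    set p : {p : (Fin n ⊕ Fin n) ⊕ (Fin n ⊕ Fin n) // p ≠ g} := ⟨Sum.inl (Sum.inr i), hp⟩
    have hApp : A p p = 1 := by
      show whisker2 L (Sum.inl (Sum.inr i)) (Sum.inl (Sum.inr i)) = 1
      simp [whisker2, Matrix.one_apply]
    have hvar := var_bound hA (Pi.single p 1) (Pi.single p 1)
    rw [single_quad, single_quad, dotProduct_single, hApp] at hvar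
    rw [hf]
    simp only [Pi.single_eq_same, mul_one] at hvar
    linarith
  -- first whisker-path node bound
  have hb3 : ∀ (i : Fin n) (hp : (Sum.inr (Sum.inl i) :
      (Fin n ⊕ Fin n) ⊕ (Fin n ⊕ Fin n)) ≠ g),
      (1 : ℝ) ≤ f ⟨Sum.inr (Sum.inl i), hp⟩ := by
    intro i hp
    set p : {p : (Fin n ⊕ Fin n) ⊕ (Fin n ⊕ Fin n) // p ≠ g} := ⟨Sum.inr (Sum.inl i), hp⟩
      with hpdef
    set q : {p : (Fin n ⊕ Fin n) ⊕ (Fin n ⊕ Fin n) // p ≠ g} :=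
      ⟨Sum.inr (Sum.inr i), by simp [hg]⟩ with hqdef
    have hApp : A p p = 2 := by
      show whisker2 L (Sum.inr (Sum.inl i)) (Sum.inr (Sum.inl i)) = 2
      simp [whisker2, two_apply]
    have hApq : A p q = -1 := by
      show whisker2 L (Sum.inr (Sum.inl i)) (Sum.inr (Sum.inr i)) = -1
      simp [whisker2, Matrix.one_apply]
    have hAqp : A q p = -1 := by
      show whisker2 L (Sum.inr (Sum.inr i)) (Sum.inr (Sum.inl i)) = -1
      simp [whisker2, Matrix.one_apply]
    have hAqq : A q q = 1 := by
      show whisker2 L (Sum.inr (Sum.inr i)) (Sum.inr (Sum.inr i)) = 1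
      simp [whisker2, Matrix.one_apply]
    have hpq : p ≠ q := by
      intro h
      have := congrArg Subtype.val h
      simp [hpdef, hqdef] at this
    set v : {p : (Fin n ⊕ Fin n) ⊕ (Fin n ⊕ Fin n) // p ≠ g} → ℝ := Pi.single p (1 : ℝ) + Pi.single q (1 : ℝ) with hvdef
    have hq1 : v ⬝ᵥ A *ᵥ v = 1 := by
      rw [hvdef, pair_quad, hApp, hApq, hAqp, hAqq]; norm_num
    have hdot : v ⬝ᵥ Pi.single p 1 = 1 := by
      rw [dotProduct_single, mul_one, hvdef, Pi.add_apply, Pi.single_eq_same,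
        Pi.single_eq_of_ne hpq]
      norm_num
    have hvar := var_bound hA v (Pi.single p 1)
    rw [single_quad, hq1, hdot] at hvar
    rw [hf]
    linarith
  -- second whisker-path node bound
  have hb4 : ∀ (i : Fin n) (hp : (Sum.inr (Sum.inr i) :
      (Fin n ⊕ Fin n) ⊕ (Fin n ⊕ Fin n)) ≠ g),
      (2 : ℝ) ≤ f ⟨Sum.inr (Sum.inr i), hp⟩ := by
    intro i hp
    set q : {p : (Fin n ⊕ Fin n) ⊕ (Fin n ⊕ Fin n) // p ≠ g} := ⟨Sum.inr (Sum.inr i), hp⟩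
      with hqdef
    set p : {p : (Fin n ⊕ Fin n) ⊕ (Fin n ⊕ Fin n) // p ≠ g} :=
      ⟨Sum.inr (Sum.inl i), by simp [hg]⟩ with hpdef
    have hApp : A p p = 2 := by
      show whisker2 L (Sum.inr (Sum.inl i)) (Sum.inr (Sum.inl i)) = 2
      simp [whisker2, two_apply]
    have hApq : A p q = -1 := by
      show whisker2 L (Sum.inr (Sum.inl i)) (Sum.inr (Sum.inr i)) = -1
      simp [whisker2, Matrix.one_apply]
    have hAqp : A q p = -1 := by
      show whisker2 L (Sum.inr (Sum.inr i)) (Sum.inr (Sum.inl i)) = -1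
      simp [whisker2, Matrix.one_apply]
    have hAqq : A q q = 1 := by
      show whisker2 L (Sum.inr (Sum.inr i)) (Sum.inr (Sum.inr i)) = 1
      simp [whisker2, Matrix.one_apply]
    have hpq : p ≠ q := by
      intro h
      have := congrArg Subtype.val h
      simp [hpdef, hqdef] at this
    set v : {p : (Fin n ⊕ Fin n) ⊕ (Fin n ⊕ Fin n) // p ≠ g} → ℝ := Pi.single p (1 : ℝ) + Pi.single q (2 : ℝ) with hvdef
    have hq2 : v ⬝ᵥ A *ᵥ v = 2 := by
      rw [hvdef, pair_quad, hApp, hApq, hAqp, hAqq]; norm_num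
    have hdot : v ⬝ᵥ Pi.single q 1 = 2 := by
      rw [dotProduct_single, mul_one, hvdef, Pi.add_apply, Pi.single_eq_same,
        Pi.single_eq_of_ne (Ne.symm hpq)]
      norm_num
    have hvar := var_bound hA v (Pi.single q 1)
    rw [single_quad, hq2, hdot] at hvar
    rw [hf]
    linarith
  -- assemble
  set F : (Fin n ⊕ Fin n) ⊕ (Fin n ⊕ Fin n) → ℝ :=
    fun s => if h : s ≠ g then f ⟨s, h⟩ else 0 with hF
  have htr : Matrix.trace A⁻¹ = ∑ p, f p := rfl
  have hFsum : ∑ s, F s = ∑ p, f p := by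
    rw [sum_of_inj Subtype.val Subtype.val_injective F
      (by intro s hs
          have : s = g := by by_contra h; exact hs ⟨s, h⟩ rfl
          rw [hF, this]; simp)]
    refine Finset.sum_congr rfl fun p _ => ?_
    rw [hF]
    simp only [dif_pos p.2]
  have hsplit : ∑ s, F s
      = (∑ i : Fin n, F (Sum.inl (Sum.inl i))) + (∑ i : Fin n, F (Sum.inl (Sum.inr i)))
        + ((∑ i : Fin n, F (Sum.inr (Sum.inl i))) + (∑ i : Fin n, F (Sum.inr (Sum.inr i)))) := by
    rw [Fintype.sum_sum_type]
    rw [Fintype.sum_sum_type (f := fun a => F (Sum.inl a)),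
      Fintype.sum_sum_type (f := fun a => F (Sum.inr a))]
  have hB1 : Matrix.trace M⁻¹ ≤ ∑ i : Fin n, F (Sum.inl (Sum.inl i)) := by
    have htrM : Matrix.trace M⁻¹ = ∑ j : {i : Fin n // i ≠ i0}, M⁻¹ j j := rfl
    rw [htrM]
    rw [sum_of_inj Subtype.val Subtype.val_injective (fun i => F (Sum.inl (Sum.inl i)))
      (by intro bb hb
          have : bb = i0 := by by_contra h; exact hb ⟨bb, h⟩ rfl
          rw [hF, this]
          simp [hg])]
    refine Finset.sum_le_sum fun j _ => ?_
    have hp : (Sum.inl (Sum.inl j.val) : (Fin n ⊕ Fin n) ⊕ (Fin n ⊕ Fin n)) ≠ g := by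
      rw [hg]
      intro h
      exact j.2 (Sum.inl_injective (Sum.inl_injective h))
    calc M⁻¹ j j ≤ f ⟨Sum.inl (Sum.inl j.val), hp⟩ := hb1 j hp
    _ = F (Sum.inl (Sum.inl j.val)) := by rw [hF]; simp only [dif_pos hp]
  have hB2 : (n : ℝ) ≤ ∑ i : Fin n, F (Sum.inl (Sum.inr i)) := by
    calc (n : ℝ) = ∑ _i : Fin n, (1 : ℝ) := by simp
    _ ≤ _ := by
      refine Finset.sum_le_sum fun i _ => ?_
      have hp : (Sum.inl (Sum.inr i) : (Fin n ⊕ Fin n) ⊕ (Fin n ⊕ Fin n)) ≠ g := by simp [hg]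
      calc (1 : ℝ) ≤ f ⟨Sum.inl (Sum.inr i), hp⟩ := hb2 i hp
      _ = F (Sum.inl (Sum.inr i)) := by rw [hF]; simp only [dif_pos hp]
  have hB3 : (n : ℝ) ≤ ∑ i : Fin n, F (Sum.inr (Sum.inl i)) := by
    calc (n : ℝ) = ∑ _i : Fin n, (1 : ℝ) := by simp
    _ ≤ _ := by
      refine Finset.sum_le_sum fun i _ => ?_
      have hp : (Sum.inr (Sum.inl i) : (Fin n ⊕ Fin n) ⊕ (Fin n ⊕ Fin n)) ≠ g := by simp [hg]
      calc (1 : ℝ) ≤ f ⟨Sum.inr (Sum.inl i), hp⟩ := hb3 i hp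
      _ = F (Sum.inr (Sum.inl i)) := by rw [hF]; simp only [dif_pos hp]
  have hB4 : 2 * (n : ℝ) ≤ ∑ i : Fin n, F (Sum.inr (Sum.inr i)) := by
    calc 2 * (n : ℝ) = ∑ _i : Fin n, (2 : ℝ) := by simp [mul_comm]
    _ ≤ _ := by
      refine Finset.sum_le_sum fun i _ => ?_
      have hp : (Sum.inr (Sum.inr i) : (Fin n ⊕ Fin n) ⊕ (Fin n ⊕ Fin n)) ≠ g := by simp [hg]
      calc (2 : ℝ) ≤ f ⟨Sum.inr (Sum.inr i), hp⟩ := hb4 i hp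
      _ = F (Sum.inr (Sum.inr i)) := by rw [hF]; simp only [dif_pos hp]
  have : Matrix.trace A⁻¹ = ∑ s, F s := by rw [hFsum, htr]
  rw [ge_iff_le, this, hsplit]
  linarith

end Trace

theorem whisker2_gramian_bound {n : ℕ} (hn : 0 < n)
    (L : Matrix (Fin n) (Fin n) ℝ)
    (hsym : L.IsSymm) (hpsd : L.PosSemidef)
    (hrow : ∀ i, ∑ j, L i j = 0)
    (hoff : ∀ i j, i ≠ j → L i j ≤ 0)
    (hground : (dropIdx (⟨0, hn⟩ : Fin n) L).PosDef) :
    (dropIdx (Sum.inl (Sum.inl ⟨0, hn⟩) : (Fin n ⊕ Fin n) ⊕ (Fin n ⊕ Fin n))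
        (whisker2 L)).PosDef ∧
    Matrix.trace
        ((dropIdx (Sum.inl (Sum.inl ⟨0, hn⟩) : (Fin n ⊕ Fin n) ⊕ (Fin n ⊕ Fin n))
          (whisker2 L))⁻¹)
      ≥ 4 * (n : ℝ) + Matrix.trace ((dropIdx (⟨0, hn⟩ : Fin n) L + 2)⁻¹) ∧
    Matrix.trace
        ((2 : ℝ)⁻¹ • (dropIdx
          (Sum.inl (Sum.inl ⟨0, hn⟩) : (Fin n ⊕ Fin n) ⊕ (Fin n ⊕ Fin n))
          (whisker2 L))⁻¹)
      ≥ (4 * (n : ℝ) + Matrix.trace ((dropIdx (⟨0, hn⟩ : Fin n) L + 2)⁻¹)) / 2 := by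
  have h1 := whisker2_grounded_posDef L ⟨0, hn⟩ hsym hpsd hground
  have h2 := whisker2_trace_bound L ⟨0, hn⟩ hsym hpsd hground
  refine ⟨h1, h2, ?_⟩
  rw [Matrix.trace_smul, smul_eq_mul]
  rw [ge_iff_le] at h2 ⊢
  linarith
end

section
/- Let L ∈ ℝ^{n×n} be the Laplacian of a connected undirected graph (symmetric positive semidefinite, zero row sums, nonpositive off-diagonal entries, with grounded Laplacian L[2:n] positive definite). For an attachment node i ∈ {1,…,n}, let L'ᵢ = [[L + eᵢeᵢᵀ, −eᵢ], [−eᵢᵀ, 1]] ∈ ℝ^{(n+1)×(n+1)} be the Laplacian obtained by attaching a single new leaf node to node i. Then L'ᵢ[2:n+1] is positive definite and Tr((L'ᵢ[2:n+1])⁻¹) ≥ C + 1, where C = min over j ∈ {1,…,n} of Tr(((L + eⱼeⱼᵀ)[2:n])⁻¹); equivalently, the controllability Gramian P = ½(L'ᵢ[2:n+1])⁻¹ satisfies Tr(P) ≥ (C+1)/2. -/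
open Matrix

/-- The Laplacian obtained from `L` by attaching a single new leaf node to node `i`:
`[[L + eᵢeᵢᵀ, −eᵢ], [−eᵢᵀ, 1]]`. -/
noncomputable def leafAttach {n : ℕ} (L : Matrix (Fin n) (Fin n) ℝ) (i : Fin n) :
    Matrix (Fin n ⊕ Unit) (Fin n ⊕ Unit) ℝ :=
  Matrix.fromBlocks
    (L + Matrix.vecMulVec (Pi.single i 1) (Pi.single i 1))
    (Matrix.replicateCol Unit (-(Pi.single i (1 : ℝ))))
    (Matrix.replicateRow Unit (-(Pi.single i (1 : ℝ))))
    1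

lemma aux_trace_submatrix_equiv {l m : Type*} [Fintype l] [Fintype m]
    (M : Matrix m m ℝ) (e : l ≃ m) : (M.submatrix e e).trace = M.trace :=
  Fintype.sum_equiv e _ _ (fun _ => rfl)

lemma aux_posDef_submatrix_equiv {l m : Type*} [Fintype l] [Fintype m]
    [DecidableEq l] [DecidableEq m] {M : Matrix m m ℝ} (h : M.PosDef) (e : l ≃ m) :
    (M.submatrix e e).PosDef := by
  refine posDef_iff_dotProduct_mulVec.2 ⟨(isHermitian_submatrix_equiv e).2 h.1, fun x hx => ?_⟩
  have hx' : x ∘ e.symm ≠ 0 := fun h0 => hx (funext fun a => by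
    simpa using congrFun h0 (e a))
  have h2 := h.dotProduct_mulVec_pos hx'
  rw [submatrix_mulVec_equiv]
  have : star x ⬝ᵥ ((M *ᵥ (x ∘ e.symm)) ∘ e) =
      star (x ∘ e.symm) ⬝ᵥ (M *ᵥ (x ∘ e.symm)) := by
    simp only [star_trivial, Pi.star_def]
    exact (comp_equiv_symm_dotProduct x _ e).symm
  rw [this]; exact h2

lemma aux_posDef_of_posSemidef_rightInv {m : Type*} [Fintype m] [DecidableEq m]
    {M N : Matrix m m ℝ} (h : M.PosSemidef) (hMN : M * N = 1) : M.PosDef := by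
  refine posDef_iff_dotProduct_mulVec.2 ⟨h.1, fun x hx => (h.dotProduct_mulVec_nonneg x).lt_of_ne' fun h0 => hx ?_⟩
  have hMx : M *ᵥ x = 0 := (h.dotProduct_mulVec_zero_iff x).1 h0
  have : (N * M) *ᵥ x = 0 := by rw [← mulVec_mulVec, hMx, mulVec_zero]
  rwa [mul_eq_one_comm.1 hMN, one_mulVec] at this

lemma aux_trace_fromBlocks {m u : Type*} [Fintype m] [Fintype u]
    (A : Matrix m m ℝ) (B : Matrix m u ℝ) (C : Matrix u m ℝ) (D : Matrix u u ℝ) :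
    (fromBlocks A B C D).trace = A.trace + D.trace := by
  simp [Matrix.trace, Fintype.sum_sum_type, fromBlocks]

lemma aux_row_mul_col {m : Type*} [Fintype m] (a b : m → ℝ) :
    replicateRow Unit a * replicateCol Unit b = (a ⬝ᵥ b) • (1 : Matrix Unit Unit ℝ) := by
  ext u u'
  simp [Matrix.mul_apply, dotProduct, Matrix.one_apply]

lemma aux_col_neg {m : Type*} (a : m → ℝ) : replicateCol Unit (-a) = -replicateCol Unit a := by
  ext; simp

lemma aux_row_neg {m : Type*} (a : m → ℝ) : replicateRow Unit (-a) = -replicateRow Unit a := by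
  ext; simp

lemma aux_col_smul {m : Type*} (r : ℝ) (a : m → ℝ) : replicateCol Unit (r • a) = r • replicateCol Unit a := by
  ext; simp

lemma aux_col_add {m : Type*} (a b : m → ℝ) : replicateCol Unit (a + b) = replicateCol Unit a + replicateCol Unit b := by
  ext; simp

theorem leaf_attach_gramian_bound {n : ℕ} (hn : 0 < n)
    (L : Matrix (Fin n) (Fin n) ℝ)
    (hsym : L.IsSymm) (hpsd : L.PosSemidef)
    (hrow : ∀ i, ∑ j, L i j = 0)
    (hoff : ∀ i j, i ≠ j → L i j ≤ 0)
    (hground : (dropIdx (⟨0, hn⟩ : Fin n) L).PosDef)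
    (i : Fin n) :
    (dropIdx (Sum.inl ⟨0, hn⟩ : Fin n ⊕ Unit) (leafAttach L i)).PosDef ∧
    Matrix.trace ((dropIdx (Sum.inl ⟨0, hn⟩ : Fin n ⊕ Unit) (leafAttach L i))⁻¹)
      ≥ (Finset.univ.inf' ⟨⟨0, hn⟩, Finset.mem_univ _⟩ fun j : Fin n =>
          Matrix.trace ((dropIdx (⟨0, hn⟩ : Fin n)
            (L + Matrix.vecMulVec (Pi.single j 1) (Pi.single j 1)))⁻¹)) + 1 ∧
    Matrix.trace
        ((2 : ℝ)⁻¹ • (dropIdx (Sum.inl ⟨0, hn⟩ : Fin n ⊕ Unit) (leafAttach L i))⁻¹)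
      ≥ ((Finset.univ.inf' ⟨⟨0, hn⟩, Finset.mem_univ _⟩ fun j : Fin n =>
          Matrix.trace ((dropIdx (⟨0, hn⟩ : Fin n)
            (L + Matrix.vecMulVec (Pi.single j 1) (Pi.single j 1)))⁻¹)) + 1) / 2 := by
  classical
  set z : Fin n := ⟨0, hn⟩ with hz
  set G : Matrix {k : Fin n // k ≠ z} {k : Fin n // k ≠ z} ℝ := dropIdx z L with hGdef
  set v : {k : Fin n // k ≠ z} → ℝ := fun k => (Pi.single i (1 : ℝ) : Fin n → ℝ) k.val with hvdef
  set W : Matrix {k : Fin n // k ≠ z} {k : Fin n // k ≠ z} ℝ := G⁻¹ with hWdef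
  have hGunit : IsUnit G.det := hground.det_pos.ne'.isUnit
  have hGW : G * W = 1 := mul_nonsing_inv G hGunit
  have hGsym : Gᵀ = G := by
    ext a b
    simpa [hGdef, dropIdx] using congrFun (congrFun hsym a.val) b.val
  have hWsym : Wᵀ = W := by rw [hWdef, transpose_nonsing_inv, hGsym]
  set c : ℝ := v ⬝ᵥ (W *ᵥ v) with hcdef
  have hWpd : W.PosDef := hground.inv
  have hc : 0 ≤ c := by simpa using hWpd.posSemidef.dotProduct_mulVec_nonneg v
  have h1c : (0:ℝ) < 1 + c := by linarith
  set w : {k : Fin n // k ≠ z} → ℝ := W *ᵥ v with hwdef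
  have hvW : v ᵥ* W = w := by rw [hwdef, ← hWsym, vecMul_transpose, hWsym]
  -- the sum-type equivalence
  let ε : {x : Fin n ⊕ Unit // x ≠ Sum.inl z} ≃ ({k : Fin n // k ≠ z} ⊕ Unit) :=
    { toFun := fun x => match x with
        | ⟨Sum.inl a, ha⟩ => Sum.inl ⟨a, fun h => ha (by rw [h])⟩
        | ⟨Sum.inr u, _⟩ => Sum.inr u
      invFun := Sum.elim (fun a => ⟨Sum.inl a.val, by simp [a.prop]⟩)
        (fun u => ⟨Sum.inr u, by simp⟩)
      left_inv := by rintro ⟨(a | u), h⟩ <;> rfl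
      right_inv := by rintro (a | u) <;> rfl }
  set A : Matrix {k : Fin n // k ≠ z} {k : Fin n // k ≠ z} ℝ := G + vecMulVec v v with hAdef
  set B : Matrix ({k : Fin n // k ≠ z} ⊕ Unit) ({k : Fin n // k ≠ z} ⊕ Unit) ℝ :=
    fromBlocks A (replicateCol Unit (-v)) (replicateRow Unit (-v)) 1 with hBdef
  have hMB : dropIdx (Sum.inl z) (leafAttach L i) = B.submatrix ε ε := by
    ext x y
    rcases x with ⟨(a | u), hx⟩ <;> rcases y with ⟨(b | u'), hy⟩ <;>
      simp [dropIdx, leafAttach, hBdef, hAdef, hGdef, hvdef, ε, fromBlocks,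
        vecMulVec_apply, Matrix.add_apply]
  -- A is dropIdx of L + e_i e_iᵀ
  have hA_eq : dropIdx z (L + Matrix.vecMulVec (Pi.single i 1) (Pi.single i 1)) = A := by
    ext a b
    simp [dropIdx, hAdef, hGdef, hvdef, vecMulVec_apply, Matrix.add_apply]
  -- useful product identities
  have hvvW : vecMulVec v v * W = replicateCol Unit v * replicateRow Unit w := by
    rw [vecMulVec_eq Unit, Matrix.mul_assoc, ← replicateRow_vecMul, hvW]
  -- the explicit inverse of B
  set N : Matrix ({k : Fin n // k ≠ z} ⊕ Unit) ({k : Fin n // k ≠ z} ⊕ Unit) ℝ :=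
    fromBlocks W (replicateCol Unit w) (replicateRow Unit w)
      (1 + replicateRow Unit v * W * replicateCol Unit v) with hNdef
  have hrwc : replicateRow Unit v * W * replicateCol Unit v = c • (1 : Matrix Unit Unit ℝ) := by
    rw [Matrix.mul_assoc, ← replicateCol_mulVec, ← hwdef, aux_row_mul_col, hcdef, hwdef]
  have hGcolw : G * replicateCol Unit w = replicateCol Unit v := by
    rw [← replicateCol_mulVec, hwdef, mulVec_mulVec, hGW, one_mulVec]
  have hAcolw : A * replicateCol Unit w = (1 + c) • replicateCol Unit v := by
    rw [hAdef, Matrix.add_mul, hGcolw, vecMulVec_eq Unit, Matrix.mul_assoc,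
      aux_row_mul_col, ← hcdef, Matrix.mul_smul, Matrix.mul_one, add_smul, one_smul]
  have hTL : A * W + replicateCol Unit (-v) * replicateRow Unit w = 1 := by
    rw [hAdef, Matrix.add_mul, hGW, hvvW, aux_col_neg, Matrix.neg_mul]
    exact add_neg_cancel_right _ _
  have hTR : A * replicateCol Unit w + replicateCol Unit (-v) * (1 + replicateRow Unit v * W * replicateCol Unit v) = 0 := by
    rw [hAcolw, hrwc, aux_col_neg,
      show (1 : Matrix Unit Unit ℝ) + c • 1 = (1 + c) • 1 by rw [add_smul, one_smul],
      Matrix.mul_smul, Matrix.mul_one, smul_neg]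
    exact add_neg_cancel _
  have hBL : replicateRow Unit (-v) * W + (1 : Matrix Unit Unit ℝ) * replicateRow Unit w = 0 := by
    rw [aux_row_neg, Matrix.neg_mul, Matrix.one_mul, ← replicateRow_vecMul, hvW]
    exact neg_add_cancel _
  have hBR : replicateRow Unit (-v) * replicateCol Unit w + (1 : Matrix Unit Unit ℝ) * (1 + replicateRow Unit v * W * replicateCol Unit v) = 1 := by
    rw [aux_row_neg, Matrix.neg_mul, Matrix.one_mul, hrwc, aux_row_mul_col, ← hcdef,
      add_comm (1 : Matrix Unit Unit ℝ) (c • 1)]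
    exact neg_add_cancel_left _ _
  have hBN : B * N = 1 := by
    rw [hBdef, hNdef, fromBlocks_multiply, hTL, hTR, hBL, hBR, fromBlocks_one]
  have hBinv : B⁻¹ = N := inv_eq_right_inv hBN
  -- positive semidefiniteness of B
  have hconj : (replicateCol Unit (-v))ᴴ = replicateRow Unit (-v) := by
    rw [conjTranspose_replicateCol]
    simp
  have hBps : B.PosSemidef := by
    letI : Invertible (1 : Matrix Unit Unit ℝ) := invertibleOne
    have h1pd : (1 : Matrix Unit Unit ℝ).PosDef := Matrix.PosDef.one
    have hS : A - replicateCol Unit (-v) * (1 : Matrix Unit Unit ℝ)⁻¹ * (replicateCol Unit (-v))ᴴ = G := by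
      rw [inv_one, Matrix.mul_one, hconj, aux_col_neg, aux_row_neg, Matrix.neg_mul,
        Matrix.mul_neg, neg_neg, ← vecMulVec_eq Unit, hAdef, add_sub_cancel_right]
    have h2 := (Matrix.PosDef.fromBlocks₂₂ A (replicateCol Unit (-v)) h1pd).2
      (by rw [hS]; exact hground.posSemidef)
    rw [hBdef]
    rwa [hconj] at h2
  have hBpd : B.PosDef := aux_posDef_of_posSemidef_rightInv hBps hBN
  -- trace of B⁻¹
  have htrace : ((dropIdx (Sum.inl z) (leafAttach L i))⁻¹).trace = W.trace + 1 + c := by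
    rw [hMB, inv_submatrix_equiv, aux_trace_submatrix_equiv, hBinv, hNdef,
      aux_trace_fromBlocks, trace_add, trace_one, hrwc, trace_smul, trace_one]
    simp [smul_eq_mul]
    ring
  -- Sherman–Morrison for A
  set s : ℝ := (1 + c)⁻¹ with hsdef
  have hAvv : A * vecMulVec w w = (1 + c) • (replicateCol Unit v * replicateRow Unit w) := by
    rw [vecMulVec_eq Unit, ← Matrix.mul_assoc, hAcolw, Matrix.smul_mul]
  have hAN2 : A * (W - s • vecMulVec w w) = 1 := by
    rw [Matrix.mul_sub, Matrix.mul_smul, hAvv, smul_smul, hsdef,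
      inv_mul_cancel₀ h1c.ne', one_smul, hAdef, Matrix.add_mul, hGW, hvvW]
    exact add_sub_cancel_right _ _
  have hAinv : A⁻¹ = W - s • vecMulVec w w := inv_eq_right_inv hAN2
  have htrA : A⁻¹.trace = W.trace - s * (w ⬝ᵥ w) := by
    rw [hAinv, trace_sub, trace_smul, vecMulVec_eq Unit, trace_replicateCol_mul_replicateRow, smul_eq_mul]
  have hww : (0:ℝ) ≤ w ⬝ᵥ w := Finset.sum_nonneg fun k _ => mul_self_nonneg _
  have hs : (0:ℝ) ≤ s := by rw [hsdef]; positivity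
  have htrAle : A⁻¹.trace ≤ W.trace := by rw [htrA]; nlinarith
  have hCle : (Finset.univ.inf' ⟨z, Finset.mem_univ _⟩ fun j : Fin n =>
      Matrix.trace ((dropIdx z
        (L + Matrix.vecMulVec (Pi.single j 1) (Pi.single j 1)))⁻¹)) ≤ A⁻¹.trace := by
    have h3 := Finset.inf'_le (fun j : Fin n =>
      Matrix.trace ((dropIdx z
        (L + Matrix.vecMulVec (Pi.single j 1) (Pi.single j 1)))⁻¹)) (Finset.mem_univ i)
    rwa [hA_eq] at h3
  refine ⟨?_, ?_, ?_⟩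
  · rw [hMB]
    exact aux_posDef_submatrix_equiv hBpd ε
  · rw [ge_iff_le, htrace]
    linarith
  · rw [trace_smul, smul_eq_mul, ge_iff_le, htrace]
    linarith
end

section
/- Let A ∈ ℝ^{n×n} be a symmetric M-matrix (positive definite with nonpositive off-diagonal entries), and let J, K ⊆ {1,…,n} be disjoint nonempty subsets. Then Tr(A[J∪K]⁻¹) ≥ Tr(A[J]⁻¹) + Tr(A[K]⁻¹); that is, the trace of the inverse of a principal submatrix of a symmetric M-matrix is superadditive over disjoint index sets. -/
open Matrix

/-- The principal submatrix `A[K]` of `A` with rows and columns indexed by the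
subset `K`. -/
def principalSub {n : ℕ} (A : Matrix (Fin n) (Fin n) ℝ) (K : Finset (Fin n)) :
    Matrix {i : Fin n // i ∈ K} {i : Fin n // i ∈ K} ℝ :=
  A.submatrix Subtype.val Subtype.val

namespace TraceInvAux

variable {m l : Type*} [Fintype m] [Fintype l] [DecidableEq m] [DecidableEq l]

omit [DecidableEq l] in
lemma trace_nonneg {M : Matrix m m ℝ} (h : M.PosSemidef) : 0 ≤ M.trace := by
  rw [Matrix.trace]
  refine Finset.sum_nonneg fun i _ => ?_
  have := h.dotProduct_mulVec_nonneg (Pi.single i 1)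
  simpa [Matrix.diag] using this

omit [DecidableEq l] in
lemma posDef_submatrix {M : Matrix m m ℝ} (hM : M.PosDef) (f : l → m)
    (hf : Function.Injective f) : (M.submatrix f f).PosDef := by
  refine posDef_iff_dotProduct_mulVec.mpr ⟨(hM.posSemidef.submatrix f).1, ?_⟩
  intro x hx
  set y : m → ℝ := Function.extend f x 0 with hy
  have hyf : ∀ j, y (f j) = x j := fun j => hf.extend_apply x 0 j
  have hy0 : ∀ i, (¬ ∃ j, f j = i) → y i = 0 := by
    intro i hi
    rw [hy, Function.extend_apply' _ _ _ hi]
    rfl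
  have hsum : ∀ g : m → ℝ, (∀ i, (¬ ∃ j, f j = i) → g i = 0) →
      ∑ i, g i = ∑ j, g (f j) := by
    intro g hg
    rw [← Finset.sum_image (f := g) (g := f)
      (fun a _ b _ hab => hf hab)]
    refine (Finset.sum_subset (Finset.subset_univ _) fun i _ hi => ?_).symm
    refine hg i fun ⟨j, hj⟩ => hi ?_
    exact Finset.mem_image.mpr ⟨j, Finset.mem_univ j, hj⟩
  have hyne : y ≠ 0 := by
    obtain ⟨j, hj⟩ := Function.ne_iff.mp hx
    intro h0
    apply hj
    rw [← hyf j, h0]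
    rfl
  have key : star y ⬝ᵥ M *ᵥ y = star x ⬝ᵥ (M.submatrix f f) *ᵥ x := by
    simp only [star_trivial, dotProduct, Matrix.mulVec, Matrix.submatrix_apply]
    rw [hsum _ (fun i hi => by rw [hy0 i hi, zero_mul])]
    refine Finset.sum_congr rfl fun j _ => ?_
    rw [hyf]
    congr 1
    rw [hsum _ (fun i hi => by rw [hy0 i hi, mul_zero])]
    exact Finset.sum_congr rfl fun k _ => by rw [hyf]
  rw [← key]
  exact hM.dotProduct_mulVec_pos hyne

omit [DecidableEq m] [DecidableEq l] in
lemma trace_fromBlocks (A : Matrix m m ℝ) (B : Matrix m l ℝ) (C : Matrix l m ℝ)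
    (D : Matrix l l ℝ) : (fromBlocks A B C D).trace = A.trace + D.trace := by
  simp [Matrix.trace, Fintype.sum_sum_type, Matrix.diag]

omit [DecidableEq m] [DecidableEq l] in
lemma trace_submatrix_equiv (M : Matrix m m ℝ) (e : l ≃ m) :
    (M.submatrix e e).trace = M.trace := by
  simp only [Matrix.trace, Matrix.diag, Matrix.submatrix_apply]
  exact Fintype.sum_equiv e _ _ fun i => rfl

omit [DecidableEq l] in
/-- If `S ≤ P` in the Loewner order (both positive definite), then
`trace P⁻¹ ≤ trace S⁻¹`. -/
lemma trace_inv_le_trace_inv {P S : Matrix m m ℝ} (hP : P.PosDef) (hS : S.PosDef)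
    (hPS : (P - S).PosSemidef) : (P⁻¹).trace ≤ (S⁻¹).trace := by
  have hPu : IsUnit P.det := isUnit_iff_ne_zero.mpr hP.det_pos.ne'
  have hSu : IsUnit S.det := isUnit_iff_ne_zero.mpr hS.det_pos.ne'
  have hSM : S + (P - S) = P := by abel
  have h1 : S⁻¹ = P⁻¹ + P⁻¹ * (P - S) * S⁻¹ := by
    calc S⁻¹ = P⁻¹ * P * S⁻¹ := by rw [Matrix.nonsing_inv_mul _ hPu, Matrix.one_mul]
    _ = (P⁻¹ * S + P⁻¹ * (P - S)) * S⁻¹ := by rw [← Matrix.mul_add, hSM]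
    _ = P⁻¹ * S * S⁻¹ + P⁻¹ * (P - S) * S⁻¹ := by rw [Matrix.add_mul]
    _ = P⁻¹ + P⁻¹ * (P - S) * S⁻¹ := by
        rw [Matrix.mul_assoc, Matrix.mul_nonsing_inv _ hSu, Matrix.mul_one]
  have h2 : S⁻¹ = P⁻¹ + S⁻¹ * (P - S) * P⁻¹ := by
    calc S⁻¹ = S⁻¹ * P * P⁻¹ := by rw [Matrix.mul_assoc,
          Matrix.mul_nonsing_inv _ hPu, Matrix.mul_one]
    _ = (S⁻¹ * S + S⁻¹ * (P - S)) * P⁻¹ := by rw [← Matrix.mul_add, hSM]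
    _ = S⁻¹ * S * P⁻¹ + S⁻¹ * (P - S) * P⁻¹ := by rw [Matrix.add_mul]
    _ = P⁻¹ + S⁻¹ * (P - S) * P⁻¹ := by rw [Matrix.nonsing_inv_mul _ hSu, Matrix.one_mul]
  have key : S⁻¹ - P⁻¹ = P⁻¹ * ((P - S) * P⁻¹) + P⁻¹ * ((P - S) * (S⁻¹ * ((P - S) * P⁻¹))) := by
    conv_lhs => rw [h1]
    rw [add_sub_cancel_left]
    conv_lhs => rw [h2]
    simp only [Matrix.mul_add, Matrix.mul_assoc]
  have hM_herm : (P - S).IsHermitian := hP.1.sub hS.1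
  have hpsd1 : (P⁻¹ * ((P - S) * P⁻¹)).PosSemidef := by
    have := hPS.conjTranspose_mul_mul_same (B := P⁻¹)
    rw [hP.1.inv] at this
    simpa only [Matrix.mul_assoc] using this
  have hpsd2 : (P⁻¹ * ((P - S) * (S⁻¹ * ((P - S) * P⁻¹)))).PosSemidef := by
    have := (hS.posSemidef.inv).conjTranspose_mul_mul_same (B := (P - S) * P⁻¹)
    rw [Matrix.conjTranspose_mul, hP.1.inv, hM_herm.eq] at this
    simpa only [Matrix.mul_assoc] using this
  have h0 : 0 ≤ (S⁻¹ - P⁻¹).trace := by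
    rw [key]
    exact trace_nonneg (hpsd1.add hpsd2)
  rw [Matrix.trace_sub] at h0
  linarith

omit [DecidableEq l] in
/-- The Schur complement of a positive-definite block matrix is positive definite. -/
lemma schur_posDef {P : Matrix m m ℝ} {Q : Matrix m l ℝ} {R : Matrix l l ℝ}
    (hP : P.PosDef) (hB : (fromBlocks P Q Qᴴ R).PosDef) :
    (R - Qᴴ * P⁻¹ * Q).PosDef := by
  haveI : Invertible P := hP.isUnit.invertible
  refine posDef_iff_dotProduct_mulVec.mpr ⟨((Matrix.PosDef.fromBlocks₁₁ Q R hP).mp hB.posSemidef).1, ?_⟩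
  intro x hx
  have hv : Sum.elim (-((P⁻¹ * Q) *ᵥ x)) x ≠ 0 := by
    intro h
    apply hx
    funext j
    exact congrFun h (Sum.inr j)
  have := hB.dotProduct_mulVec_pos hv
  rw [Matrix.dotProduct_mulVec, schur_complement_eq₁₁ Q R _ _ hP.1, neg_add_cancel,
    dotProduct_zero, zero_add] at this
  rwa [Matrix.dotProduct_mulVec]

end TraceInvAux

open TraceInvAux in
/-- For a symmetric M-matrix `A` (positive definite with nonpositive off-diagonal
entries), the trace of the inverse of a principal submatrix is superadditive over
disjoint index sets. -/
theorem trace_inv_principalSub_superadditive {n : ℕ}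
    (A : Matrix (Fin n) (Fin n) ℝ)
    (hsym : A.IsSymm) (hpd : A.PosDef)
    (hoff : ∀ i j, i ≠ j → A i j ≤ 0)
    (J K : Finset (Fin n)) (hdisj : Disjoint J K)
    (hJ : J.Nonempty) (hK : K.Nonempty) :
    Matrix.trace ((principalSub A (J ∪ K))⁻¹)
      ≥ Matrix.trace ((principalSub A J)⁻¹) + Matrix.trace ((principalSub A K)⁻¹) := by
  classical
  set P := principalSub A J with hPdef
  set R := principalSub A K with hRdef
  set Q : Matrix {i : Fin n // i ∈ J} {i : Fin n // i ∈ K} ℝ :=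
    A.submatrix Subtype.val Subtype.val with hQdef
  set e : ({i : Fin n // i ∈ J} ⊕ {i : Fin n // i ∈ K}) ≃ {i : Fin n // i ∈ J ∪ K} :=
    Equiv.Finset.union J K hdisj with hedef
  have hblock : (principalSub A (J ∪ K)).submatrix e e = fromBlocks P Q Qᴴ R := by
    ext i j
    cases i with
    | inl a =>
      cases j with
      | inl b => rfl
      | inr b => rfl
    | inr a =>
      cases j with
      | inl b =>
        show A a.1 b.1 = Qᴴ a b
        simp only [conjTranspose_apply, hQdef, submatrix_apply, star_trivial]
        exact (hsym.apply a.1 b.1).symm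
      | inr b => rfl
  have hP : P.PosDef := posDef_submatrix hpd _ Subtype.val_injective
  have hR : R.PosDef := posDef_submatrix hpd _ Subtype.val_injective
  have hB : (fromBlocks P Q Qᴴ R).PosDef := by
    rw [← hblock]
    have h2 : (principalSub A (J ∪ K)).submatrix (⇑e) (⇑e)
        = A.submatrix (Subtype.val ∘ e) (Subtype.val ∘ e) := by
      simp [principalSub, Matrix.submatrix_submatrix]
    rw [h2]
    exact posDef_submatrix hpd _ (Subtype.val_injective.comp e.injective)
  haveI hPinv : Invertible P := hP.isUnit.invertible
  have hSchur : (R - Qᴴ * P⁻¹ * Q).PosDef := schur_posDef hP hB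
  haveI hSinv' : Invertible (R - Qᴴ * ⅟P * Q) := by
    rw [invOf_eq_nonsing_inv]
    exact hSchur.isUnit.invertible
  haveI hBinv : Invertible (fromBlocks P Q Qᴴ R) := hB.isUnit.invertible
  have hBinv_eq : (fromBlocks P Q Qᴴ R)⁻¹ =
      fromBlocks (P⁻¹ + P⁻¹ * Q * (R - Qᴴ * P⁻¹ * Q)⁻¹ * Qᴴ * P⁻¹)
        (-(P⁻¹ * Q * (R - Qᴴ * P⁻¹ * Q)⁻¹))
        (-((R - Qᴴ * P⁻¹ * Q)⁻¹ * Qᴴ * P⁻¹)) ((R - Qᴴ * P⁻¹ * Q)⁻¹) := by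
    rw [← invOf_eq_nonsing_inv (fromBlocks P Q Qᴴ R), invOf_fromBlocks₁₁_eq]
    rw [invOf_eq_nonsing_inv (R - Qᴴ * ⅟P * Q)]
    rw [invOf_eq_nonsing_inv P]
  have htr : ((fromBlocks P Q Qᴴ R)⁻¹).trace
      = (P⁻¹).trace + (P⁻¹ * Q * (R - Qᴴ * P⁻¹ * Q)⁻¹ * Qᴴ * P⁻¹).trace
        + ((R - Qᴴ * P⁻¹ * Q)⁻¹).trace := by
    rw [hBinv_eq, trace_fromBlocks, Matrix.trace_add]
  have h1 : 0 ≤ (P⁻¹ * Q * (R - Qᴴ * P⁻¹ * Q)⁻¹ * Qᴴ * P⁻¹).trace := by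
    refine trace_nonneg ?_
    have := (hSchur.posSemidef.inv).conjTranspose_mul_mul_same (B := Qᴴ * P⁻¹)
    rw [Matrix.conjTranspose_mul, hP.1.inv, Matrix.conjTranspose_conjTranspose] at this
    simpa only [Matrix.mul_assoc] using this
  have h2 : (R⁻¹).trace ≤ ((R - Qᴴ * P⁻¹ * Q)⁻¹).trace := by
    refine trace_inv_le_trace_inv hR hSchur ?_
    rw [sub_sub_cancel]
    exact (hP.posSemidef.inv).conjTranspose_mul_mul_same (B := Q)
  have hmain : Matrix.trace ((principalSub A (J ∪ K))⁻¹)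
      = ((fromBlocks P Q Qᴴ R)⁻¹).trace := by
    rw [← hblock, Matrix.inv_submatrix_equiv, trace_submatrix_equiv]
  rw [ge_iff_le, hmain, htr]
  linarith
end
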